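/- arXiv:1111.6800 — 9 statements merged into one kernel-verified Lean document; each statement's English description precedes it below -/
import Mathlib

section
/- Let δ ≥ 0 be an integer and let p < q < r be odd primes with r > pq. Suppose Φ_{pqr} is δ₊-optimal, i.e. the set of coefficients A{pqr} equals the set of integers in the interval [-(p-1)/2 + δ, (p+1)/2 + δ]. Let s > pq be a prime with s ≡ -r (mod pq). Then Φ_{pqs} is δ₋-optimal, i.e. A{pqs} equals the set of integers in the interval [-(p+1)/2 - δ, (p-1)/2 - δ]. -/
open Polynomial Finset

/-! Auxiliary machinery: explicit "Kaplan-style" formula for coefficients of `Φ_{pqr}`. -/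

/-- Coefficients of `g = (∑_{i<q} X^i) * (X^p - 1)`, extended to `ℤ` as index. -/
def gcZ (p q : ℕ) (t : ℤ) : ℤ :=
  (if (p : ℤ) ≤ t ∧ t < (p : ℤ) + (q : ℤ) then 1 else 0)
    - (if 0 ≤ t ∧ t < (q : ℤ) then 1 else 0)

/-- `pq`-periodic extension of `gcZ`. -/
def perZ (p q : ℕ) (t : ℤ) : ℤ := gcZ p q (t % ((p : ℤ) * (q : ℤ)))

/-- Truncated version: `Γ t = per t` for `t ≥ 0`, `0` for `t < 0`. -/
def GamZ (p q : ℕ) (t : ℤ) : ℤ := if 0 ≤ t then perZ p q t else 0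

lemma gcZ_neg {p q : ℕ} {t : ℤ} (h : t < 0) : gcZ p q t = 0 := by
  unfold gcZ; split_ifs <;> omega

lemma gcZ_big {p q : ℕ} {t : ℤ} (h : (p : ℤ) + q ≤ t) : gcZ p q t = 0 := by
  unfold gcZ; split_ifs <;> omega

lemma perZ_congr {p q : ℕ} {a b : ℤ} (h : a ≡ b [ZMOD ((p : ℤ) * (q : ℤ))]) :
    perZ p q a = perZ p q b := by
  have h' : a % ((p : ℤ) * (q : ℤ)) = b % ((p : ℤ) * (q : ℤ)) := h
  unfold perZ; rw [h']

lemma perZ_reflect {p q : ℕ} (hp : 2 ≤ p) (hq : 2 ≤ q) (t : ℤ) :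
    perZ p q ((p : ℤ) + q - 1 - t) = - perZ p q t := by
  set N : ℤ := (p : ℤ) * (q : ℤ) with hN
  have hN0 : 0 < N := by positivity
  have hcN : (p : ℤ) + q - 1 < N := by
    have : p + q ≤ p * q := Nat.add_le_mul hp hq
    push_cast at this ⊢
    omega
  set c : ℤ := (p : ℤ) + q - 1 with hc
  set a : ℤ := t % N with ha
  have h1 : 0 ≤ a := Int.emod_nonneg t hN0.ne'
  have h2 : a < N := Int.emod_lt_of_pos t hN0
  have hta : t ≡ a [ZMOD N] := (Int.emod_emod_of_dvd t dvd_rfl).symm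
  have key : (c - t) % N = (c - a) % N := Int.ModEq.sub_left c hta
  show gcZ p q ((c - t) % N) = - gcZ p q a
  rw [key]
  rcases le_or_gt a c with hac | hac
  · have e : (c - a) % N = c - a := Int.emod_eq_of_lt (by omega) (by omega)
    rw [e]
    have hc2 : c = (p : ℤ) + q - 1 := hc
    unfold gcZ
    split_ifs <;> omega
  · have e : (c - a) % N = c - a + N := by
      have e1 : (c - a) % N = ((c - a) + N * 1) % N := (Int.add_mul_emod_self_left (c - a) N 1).symm
      rw [e1, mul_one]
      exact Int.emod_eq_of_lt (by omega) (by omega)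
    rw [e, gcZ_big (by omega), gcZ_big (by omega)]
    ring

lemma GamZ_small {p q : ℕ} {t : ℤ} (h : t < (p : ℤ) * (q : ℤ)) : GamZ p q t = gcZ p q t := by
  unfold GamZ perZ
  split_ifs with h0
  · rw [Int.emod_eq_of_lt h0 h]
  · rw [gcZ_neg (by omega)]

lemma GamZ_rec {p q : ℕ} (hp : 2 ≤ p) (hq : 2 ≤ q) (t : ℤ) :
    GamZ p q t = GamZ p q (t - (p : ℤ) * (q : ℤ)) + gcZ p q t := by
  set N : ℤ := (p : ℤ) * (q : ℤ) with hN
  have hN0 : 0 < N := by positivity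
  have hpqN : (p : ℤ) + q ≤ N := by
    have : p + q ≤ p * q := Nat.add_le_mul hp hq
    push_cast at this ⊢
    omega
  rcases lt_or_ge t N with h | h
  · rw [GamZ_small h]
    have hz : GamZ p q (t - N) = 0 := by unfold GamZ; rw [if_neg (by omega)]
    rw [hz, zero_add]
  · have h0 : 0 ≤ t := le_trans hN0.le h
    have h0' : 0 ≤ t - N := by omega
    unfold GamZ
    rw [if_pos h0, if_pos h0', gcZ_big (by omega), add_zero]
    apply perZ_congr
    show t % N = (t - N) % N
    conv_lhs => rw [show t = (t - N) + N * 1 by ring]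
    rw [Int.add_mul_emod_self_left]

/-- The polynomial `g` with `Φ_{pq} * g = X^{pq} - 1`. -/
noncomputable def gPoly (p q : ℕ) : Polynomial ℤ :=
  (∑ i ∈ Finset.range q, X ^ i) * (X ^ p - 1)

lemma coeff_geom (q j : ℕ) : (∑ i ∈ Finset.range q, (X : Polynomial ℤ) ^ i).coeff j
    = if j < q then 1 else 0 := by
  rw [finset_sum_coeff]
  simp only [coeff_X_pow]
  rw [Finset.sum_ite_eq (Finset.range q) j fun _ => (1 : ℤ)]
  simp [Finset.mem_range]

lemma coeff_gPoly (p q j : ℕ) : (gPoly p q).coeff j = gcZ p q (j : ℤ) := by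
  unfold gPoly
  rw [mul_sub, mul_one, coeff_sub, coeff_mul_X_pow', coeff_geom]
  unfold gcZ
  split_ifs with h1 h2 <;> rw [coeff_geom] <;> split_ifs <;> omega

lemma cyc_mul_gPoly {p q : ℕ} (hp : p.Prime) (hq : q.Prime) (hne : p ≠ q) :
    cyclotomic (p * q) ℤ * gPoly p q = X ^ (p * q) - 1 := by
  haveI : Fact q.Prime := ⟨hq⟩
  have hdvd : ¬p ∣ q := fun h => hne ((Nat.prime_dvd_prime_iff_eq hp hq).mp h)
  have h2 : (expand ℤ p) (cyclotomic q ℤ * (X - 1)) = cyclotomic (p * q) ℤ * gPoly p q := by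
    rw [map_mul, cyclotomic_expand_eq_cyclotomic_mul hp hdvd, map_sub, expand_X, map_one,
      mul_comm q p]
    unfold gPoly
    rw [cyclotomic_prime ℤ q]
    ring
  rw [← h2, cyclotomic_prime_mul_X_sub_one, map_sub, map_pow, expand_X, map_one, ← pow_mul]

lemma key_identity {p q r : ℕ} (hp : p.Prime) (hq : q.Prime) (hne : p ≠ q)
    (hr : r.Prime) (hdiv : ¬r ∣ p * q) :
    cyclotomic (p * q * r) ℤ * (X ^ (p * q) - 1)
      = (expand ℤ r) (cyclotomic (p * q) ℤ) * gPoly p q := by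
  rw [cyclotomic_expand_eq_cyclotomic_mul hr hdiv,
    mul_assoc (cyclotomic (p * q * r) ℤ) (cyclotomic (p * q) ℤ) (gPoly p q),
    cyc_mul_gPoly hp hq hne]

lemma coeff_monomial_mul' (m : ℕ) (c : ℤ) (g : Polynomial ℤ) (n : ℕ) :
    (monomial m c * g).coeff n = c * (if m ≤ n then g.coeff (n - m) else 0) := by
  rw [← C_mul_X_pow_eq_monomial]
  have h : C c * X ^ m * g = C c * (g * X ^ m) := by ring
  rw [h, coeff_C_mul, coeff_mul_X_pow']

lemma coeff_eq {p q r : ℕ} (hp : p.Prime) (hq : q.Prime) (hne : p ≠ q)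
    (hr : r.Prime) (hdiv : ¬r ∣ p * q) (n : ℕ) :
    (cyclotomic (p * q * r) ℤ).coeff n
      = (if p * q ≤ n then (cyclotomic (p * q * r) ℤ).coeff (n - p * q) else 0)
        - ∑ k ∈ Finset.range ((p * q).totient + 1),
            (cyclotomic (p * q) ℤ).coeff k * gcZ p q ((n : ℤ) - (r : ℤ) * k) := by
  have H := congrArg (fun f : Polynomial ℤ => f.coeff n) (key_identity hp hq hne hr hdiv)
  rw [mul_sub, mul_one, coeff_sub, coeff_mul_X_pow'] at H
  set Q := cyclotomic (p * q) ℤ with hQdef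
  have hdeg : Q.natDegree < (p * q).totient + 1 := by
    rw [hQdef, natDegree_cyclotomic]; omega
  have hQ : (expand ℤ r) Q = ∑ k ∈ Finset.range ((p * q).totient + 1),
      monomial (k * r) (Q.coeff k) := by
    conv_lhs => rw [Q.as_sum_range' _ hdeg]
    rw [map_sum]
    exact Finset.sum_congr rfl fun k _ => expand_monomial r k (Q.coeff k)
  rw [hQ, Finset.sum_mul, finset_sum_coeff] at H
  have hterm : ∀ k ∈ Finset.range ((p * q).totient + 1),
      (monomial (k * r) (Q.coeff k) * gPoly p q).coeff n
        = Q.coeff k * gcZ p q ((n : ℤ) - (r : ℤ) * k) := by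
    intro k _
    rw [coeff_monomial_mul']
    congr 1
    by_cases h : k * r ≤ n
    · rw [if_pos h, coeff_gPoly]
      congr 1
      push_cast [h]
      ring
    · rw [if_neg h, gcZ_neg]
      have h' : (n : ℤ) < (k : ℤ) * r := by exact_mod_cast Nat.lt_of_not_le h
      linarith
  rw [Finset.sum_congr rfl hterm] at H
  omega

lemma coeff_formula {p q r : ℕ} (hp : p.Prime) (hq : q.Prime) (hne : p ≠ q)
    (hr : r.Prime) (hdiv : ¬r ∣ p * q) (n : ℕ) :
    (cyclotomic (p * q * r) ℤ).coeff n
      = -∑ k ∈ Finset.range ((p * q).totient + 1),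
          (cyclotomic (p * q) ℤ).coeff k * GamZ p q ((n : ℤ) - (r : ℤ) * k) := by
  induction n using Nat.strong_induction_on with
  | _ n ih =>
    have hp2 : 2 ≤ p := hp.two_le
    have hq2 : 2 ≤ q := hq.two_le
    rw [coeff_eq hp hq hne hr hdiv n]
    by_cases h : p * q ≤ n
    · rw [if_pos h, ih (n - p * q)
        (by have h0 : 0 < p * q := Nat.mul_pos hp.pos hq.pos; omega)]
      have hcast : ((n - p * q : ℕ) : ℤ) = (n : ℤ) - (p : ℤ) * q := by
        push_cast [h]; ring
      rw [hcast]
      have hterm : ∀ k ∈ Finset.range ((p * q).totient + 1),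
          (cyclotomic (p * q) ℤ).coeff k * GamZ p q ((n : ℤ) - (r : ℤ) * k)
            = (cyclotomic (p * q) ℤ).coeff k * GamZ p q ((n : ℤ) - (p : ℤ) * q - (r : ℤ) * k)
              + (cyclotomic (p * q) ℤ).coeff k * gcZ p q ((n : ℤ) - (r : ℤ) * k) := by
        intro k _
        rw [GamZ_rec hp2 hq2 ((n : ℤ) - (r : ℤ) * k)]
        have harg : (n : ℤ) - (r : ℤ) * k - (p : ℤ) * q
            = (n : ℤ) - (p : ℤ) * q - (r : ℤ) * k := by ring
        rw [harg]; ring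
      conv_rhs => rw [Finset.sum_congr rfl hterm]
      rw [Finset.sum_add_distrib]
      ring
    · rw [if_neg h, zero_sub, neg_inj]
      apply Finset.sum_congr rfl
      intro k _
      congr 1
      rw [GamZ_small]
      have h1 : (n : ℤ) < (p : ℤ) * q := by exact_mod_cast Nat.lt_of_not_le h
      have h2 : 0 ≤ (r : ℤ) * k := by positivity
      linarith

/-- Value function: the coefficient set of `Φ_{pqr}` equals the set of its values. -/
noncomputable def Wval (p q : ℕ) (ρ : ℤ) (K : ℕ) (ν : ℤ) : ℤ :=
  -∑ k ∈ Finset.range ((p * q).totient + 1),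
    if k ≤ K then (cyclotomic (p * q) ℤ).coeff k * perZ p q (ν - ρ * k) else 0

lemma coeff_set_eq {p q r : ℕ} (hp : p.Prime) (hq : q.Prime) (hne : p ≠ q)
    (hr : r.Prime) (hdiv : ¬r ∣ p * q) (hrpq : p * q < r) :
    {c : ℤ | ∃ n : ℕ, (cyclotomic (p * q * r) ℤ).coeff n = c}
      = {c : ℤ | ∃ K : ℕ, ∃ ν : ℤ, Wval p q (r : ℤ) K ν = c} := by
  have hr0 : 0 < r := hr.pos
  have hN0 : 0 < (p : ℤ) * q := by
    have h1 := hp.pos; have h2 := hq.pos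
    positivity
  ext c
  simp only [Set.mem_setOf_eq]
  constructor
  · rintro ⟨n, hn⟩
    refine ⟨n / r, (n : ℤ), ?_⟩
    rw [← hn, coeff_formula hp hq hne hr hdiv n]
    unfold Wval
    rw [neg_inj]
    apply Finset.sum_congr rfl
    intro k _
    by_cases h : k ≤ n / r
    · have hrk : r * k ≤ n := by
        rw [mul_comm]
        exact (Nat.le_div_iff_mul_le hr0).mp h
      have h0 : 0 ≤ (n : ℤ) - (r : ℤ) * k := by
        have h' : ((r * k : ℕ) : ℤ) ≤ (n : ℤ) := by exact_mod_cast hrk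
        push_cast at h'
        linarith
      rw [if_pos h]
      unfold GamZ
      rw [if_pos h0]
    · have hrk : n < r * k := by
        by_contra hc
        exact h ((Nat.le_div_iff_mul_le hr0).mpr (by rw [mul_comm]; omega))
      rw [if_neg h]
      have h0 : (n : ℤ) - (r : ℤ) * k < 0 := by
        have h' : (n : ℤ) < ((r * k : ℕ) : ℤ) := by exact_mod_cast hrk
        push_cast at h'
        linarith
      unfold GamZ
      rw [if_neg (not_le.mpr h0), mul_zero]
  · rintro ⟨K, ν, hW⟩
    set T := (p * q).totient with hT
    set K' := min K T with hK'
    have hWW : Wval p q (r : ℤ) K ν = Wval p q (r : ℤ) K' ν := by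
      unfold Wval
      rw [neg_inj]
      apply Finset.sum_congr rfl
      intro k hk
      rw [Finset.mem_range] at hk
      have hiff : k ≤ K ↔ k ≤ K' := by omega
      rw [if_congr hiff rfl rfl]
    set u : ℤ := (ν - (r : ℤ) * K') % ((p : ℤ) * q) with hu
    have hu0 : 0 ≤ u := Int.emod_nonneg _ hN0.ne'
    have hu1 : u < (p : ℤ) * q := Int.emod_lt_of_pos _ hN0
    refine ⟨r * K' + u.toNat, ?_⟩
    have hncast : ((r * K' + u.toNat : ℕ) : ℤ) = (r : ℤ) * K' + u := by
      push_cast [Int.toNat_of_nonneg hu0]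
      ring
    rw [coeff_formula hp hq hne hr hdiv, ← hW, hWW]
    unfold Wval
    rw [neg_inj]
    apply Finset.sum_congr rfl
    intro k hk
    rw [Finset.mem_range] at hk
    rw [hncast]
    by_cases hkK : k ≤ K'
    · rw [if_pos hkK]
      have hle : (r : ℤ) * k ≤ (r : ℤ) * K' := by
        apply mul_le_mul_of_nonneg_left (by exact_mod_cast hkK) (by positivity)
      have hge : 0 ≤ (r : ℤ) * K' + u - (r : ℤ) * k := by linarith
      unfold GamZ
      rw [if_pos hge]
      congr 1
      apply perZ_congr
      have e1 : u ≡ ν - (r : ℤ) * K' [ZMOD ((p : ℤ) * q)] :=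
        Int.emod_emod_of_dvd _ dvd_rfl
      have e2 : (r : ℤ) * K' + u ≡ (r : ℤ) * K' + (ν - (r : ℤ) * K') [ZMOD ((p : ℤ) * q)] :=
        Int.ModEq.add_left _ e1
      rw [show (r : ℤ) * K' + (ν - (r : ℤ) * K') = ν by ring] at e2
      exact e2.sub_right _
    · rw [if_neg hkK]
      have h1 : ((p : ℤ) * q) < (r : ℤ) := by exact_mod_cast hrpq
      have h2 : (r : ℤ) * (K' + 1) ≤ (r : ℤ) * k := by
        apply mul_le_mul_of_nonneg_left _ (by positivity)
        have : K' + 1 ≤ k := by omega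
        exact_mod_cast this
      have hlt : (r : ℤ) * K' + u - (r : ℤ) * k < 0 := by
        have : (r : ℤ) * (K' + 1) = (r : ℤ) * K' + r := by ring
        linarith
      unfold GamZ
      rw [if_neg (not_le.mpr hlt), mul_zero]

lemma Wval_neg {p q : ℕ} (hp : 2 ≤ p) (hq : 2 ≤ q) {ρ σ : ℤ}
    (hρσ : σ ≡ -ρ [ZMOD ((p : ℤ) * q)]) (K : ℕ) (ν : ℤ) :
    Wval p q σ K ((p : ℤ) + q - 1 - ν) = - Wval p q ρ K ν := by
  unfold Wval
  rw [neg_neg, ← Finset.sum_neg_distrib]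
  apply Finset.sum_congr rfl
  intro k _
  by_cases hkK : k ≤ K
  · rw [if_pos hkK, if_pos hkK]
    have e1 : ((p : ℤ) + q - 1 - ν) - σ * k ≡ ((p : ℤ) + q - 1 - ν) - (-ρ) * k
        [ZMOD ((p : ℤ) * q)] := by
      exact Int.ModEq.sub_left _ (Int.ModEq.mul_right _ hρσ)
    have e2 : perZ p q (((p : ℤ) + q - 1 - ν) - σ * k) = - perZ p q (ν - ρ * k) := by
      rw [perZ_congr e1, show ((p : ℤ) + q - 1 - ν) - (-ρ) * k
          = (p : ℤ) + q - 1 - (ν - ρ * k) by ring, perZ_reflect hp hq]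
    rw [e2]
    ring
  · rw [if_neg hkK, if_neg hkK, neg_zero]

/-- If `Φ_{pqr}` is `δ₊`-optimal, `r > pq` and `s > pq` is a prime with
`s ≡ -r (mod pq)`, then `Φ_{pqs}` is `δ₋`-optimal. -/
theorem stmt_0 (δ : ℤ) (hδ : 0 ≤ δ) (p q r s : ℕ)
    (hp : p.Prime) (hq : q.Prime) (hr : r.Prime) (hs : s.Prime)
    (hpodd : Odd p) (hqodd : Odd q) (hrodd : Odd r)
    (hpq : p < q) (hqr : q < r) (hrpq : p * q < r)
    (hspq : p * q < s) (hcong : (s : ℤ) ≡ -(r : ℤ) [ZMOD ((p : ℤ) * q)])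
    (hopt : {c : ℤ | ∃ k : ℕ, (cyclotomic (p * q * r) ℤ).coeff k = c}
      = Set.Icc (-(((p : ℤ) - 1) / 2) + δ) (((p : ℤ) + 1) / 2 + δ)) :
    {c : ℤ | ∃ k : ℕ, (cyclotomic (p * q * s) ℤ).coeff k = c}
      = Set.Icc (-(((p : ℤ) + 1) / 2) - δ) (((p : ℤ) - 1) / 2 - δ) := by
  have hp2 : 2 ≤ p := hp.two_le
  have hq2 : 2 ≤ q := hq.two_le
  have hpq0 : 0 < p * q := Nat.mul_pos hp.pos hq.pos
  have hne : p ≠ q := hpq.ne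
  have hrdiv : ¬r ∣ p * q := fun h => absurd (Nat.le_of_dvd hpq0 h) (by omega)
  have hsdiv : ¬s ∣ p * q := fun h => absurd (Nat.le_of_dvd hpq0 h) (by omega)
  have hcong' : (r : ℤ) ≡ -(s : ℤ) [ZMOD ((p : ℤ) * q)] := by
    have h2 := hcong.neg
    rw [neg_neg] at h2
    exact h2.symm
  rw [coeff_set_eq hp hq hne hs hsdiv hspq]
  rw [coeff_set_eq hp hq hne hr hrdiv hrpq] at hopt
  ext c
  simp only [Set.mem_setOf_eq]
  have hmem : (∃ K : ℕ, ∃ ν : ℤ, Wval p q (s : ℤ) K ν = c)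
      ↔ (∃ K : ℕ, ∃ ν : ℤ, Wval p q (r : ℤ) K ν = -c) := by
    constructor
    · rintro ⟨K, ν, h⟩
      refine ⟨K, (p : ℤ) + q - 1 - ν, ?_⟩
      rw [Wval_neg hp2 hq2 hcong' K ν, h]
    · rintro ⟨K, ν, h⟩
      refine ⟨K, (p : ℤ) + q - 1 - ν, ?_⟩
      rw [Wval_neg hp2 hq2 hcong K ν, h, neg_neg]
  rw [hmem]
  have hIcc : -c ∈ {c : ℤ | ∃ K : ℕ, ∃ ν : ℤ, Wval p q (r : ℤ) K ν = c}
      ↔ -c ∈ Set.Icc (-(((p : ℤ) - 1) / 2) + δ) (((p : ℤ) + 1) / 2 + δ) := by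
    rw [hopt]
  simp only [Set.mem_setOf_eq, Set.mem_Icc] at hIcc
  rw [hIcc, Set.mem_Icc]
  constructor <;> intro h <;> constructor <;> linarith [h.1, h.2]
end

section
/- (Kaplan's Lemma) Let 2 < p < q < r be primes and let k ≥ 0 be an integer. For an integer i ≥ 0 put b_i = a_{pq}(i) if r·i ≤ k and b_i = 0 otherwise. For an integer m, let f(m) be the unique integer with 0 ≤ f(m) < pq and r·f(m) ≡ k - m (mod pq). Then a_{pqr}(k) = Σ_{m=0}^{p-1} (b_{f(m)} - b_{f(m+q)}). -/
open Polynomial Finset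

private def Dc (p q n : ℕ) : ℤ :=
  (if n < p then 1 else 0) - (if q ≤ n ∧ n < q + p then 1 else 0)

private noncomputable def Dpoly (p q : ℕ) : ℤ[X] :=
  (∑ j ∈ Finset.range p, X ^ j) * (1 - X ^ q)

private lemma geom_coeff (p n : ℕ) :
    (∑ j ∈ range p, (X : ℤ[X]) ^ j).coeff n = if n < p then 1 else 0 := by
  rw [finset_sum_coeff]
  simp only [coeff_X_pow]
  rw [Finset.sum_ite_eq (range p) n (fun _ => (1:ℤ))]
  simp [Finset.mem_range]

private lemma shift_sum (p q n : ℕ) :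
    (∑ j ∈ range p, if n = j + q then (1:ℤ) else 0)
      = if q ≤ n ∧ n < q + p then 1 else 0 := by
  rcases le_or_gt q n with h | h
  · have he : ∀ j, (n = j + q) ↔ (j = n - q) := fun j => by omega
    simp_rw [he]
    rw [Finset.sum_ite_eq' (range p) (n - q) (fun _ => (1:ℤ))]
    simp only [Finset.mem_range]
    by_cases h2 : n - q < p
    · rw [if_pos h2, if_pos (by omega)]
    · rw [if_neg h2, if_neg (by omega)]
  · rw [if_neg (by omega), Finset.sum_eq_zero]
    intro j _; rw [if_neg (by omega)]

private lemma coeff_Dpoly (p q n : ℕ) : (Dpoly p q).coeff n = Dc p q n := by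
  unfold Dpoly Dc
  rw [mul_sub, mul_one, coeff_sub, geom_coeff]
  congr 1
  rw [Finset.sum_mul]
  simp_rw [← pow_add]
  rw [finset_sum_coeff]
  simp only [coeff_X_pow]
  exact shift_sum p q n

private lemma Dc_eq_zero (p q n : ℕ) (h : q + p ≤ n) : Dc p q n = 0 := by
  unfold Dc
  rw [if_neg (by omega), if_neg (by omega), sub_zero]

private lemma Dc_sum (p q w : ℕ) :
    Dc p q w = ∑ m ∈ range p, ((if w = m then (1:ℤ) else 0) - (if w = m + q then 1 else 0)) := by
  rw [Finset.sum_sub_distrib]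
  unfold Dc
  congr 1
  · rw [Finset.sum_ite_eq (range p) w (fun _ => (1:ℤ))]
    simp [Finset.mem_range]
  · exact (shift_sum p q w).symm

private lemma P0 (p q : ℕ) :
    Dpoly p q * (1 - X) = (1 - X ^ p) * (1 - X ^ q) := by
  unfold Dpoly
  have h := geom_sum_mul (X : ℤ[X]) p
  linear_combination ((X : ℤ[X]) ^ q - 1) * h

private lemma P1 (p q : ℕ) (hp : p.Prime) (hq : q.Prime) (hpq : p < q) :
    cyclotomic (p * q) ℤ * ((1 - X ^ p) * (1 - X ^ q)) = (1 - X ^ (p * q)) * (1 - X) := by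
  have hqp : ¬ q ∣ p := fun h => absurd (Nat.le_of_dvd hp.pos h) (by omega)
  have e1 := cyclotomic_expand_eq_cyclotomic_mul hq hqp (R := ℤ)
  haveI := Fact.mk hp
  have e2 : cyclotomic p ℤ * (X - 1) = X ^ p - 1 := cyclotomic_prime_mul_X_sub_one ℤ p
  have e3 : cyclotomic (p * q) ℤ * cyclotomic p ℤ * ((X : ℤ[X]) ^ q - 1)
      = X ^ (p * q) - 1 := by
    have h := congrArg (expand ℤ q) e2
    rw [map_mul, map_sub, map_sub, map_pow, expand_X, map_one, e1, ← pow_mul,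
      mul_comm q p] at h
    exact h
  linear_combination (-(cyclotomic (p*q) ℤ * ((X:ℤ[X])^q - 1))) * e2 + ((X:ℤ[X]) - 1) * e3

private lemma P3 (p q r : ℕ) (hp : p.Prime) (hq : q.Prime) (hr : r.Prime)
    (hpq : p < q) (hqr : q < r) :
    cyclotomic (p * q * r) ℤ * ((1 - X ^ (p * q)) * (1 - X))
      = expand ℤ r (cyclotomic (p * q) ℤ) * ((1 - X ^ p) * (1 - X ^ q)) := by
  have hrpq : ¬ r ∣ p * q := by
    intro h
    rcases hr.dvd_mul.mp h with h | h
    · exact absurd (Nat.le_of_dvd hp.pos h) (by omega)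
    · exact absurd (Nat.le_of_dvd hq.pos h) (by omega)
  have e4 := cyclotomic_expand_eq_cyclotomic_mul hr hrpq (R := ℤ)
  have h1 := P1 p q hp hq hpq
  linear_combination (-(cyclotomic (p*q*r) ℤ)) * h1 - ((1 - (X:ℤ[X])^p) * (1 - X^q)) * e4

private noncomputable def G (p q : ℕ) : PowerSeries ℤ :=
  PowerSeries.mk fun n => Dc p q (n % (p * q))

private lemma L1 (p q : ℕ) (hsum : q + p ≤ p * q) :
    G p q * (1 - PowerSeries.X ^ (p * q)) = (Dpoly p q : PowerSeries ℤ) := by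
  ext n
  rw [mul_sub, mul_one, map_sub, PowerSeries.coeff_mul_X_pow', Polynomial.coeff_coe,
    coeff_Dpoly]
  simp only [G, PowerSeries.coeff_mk]
  split_ifs with h
  · rw [← Nat.mod_eq_sub_mod h, sub_self, Dc_eq_zero p q n (by omega)]
  · rw [sub_zero, Nat.mod_eq_of_lt (by omega)]

private lemma L2 (p q : ℕ) :
    (Dpoly p q : PowerSeries ℤ) * (1 - PowerSeries.X)
      = (1 - PowerSeries.X ^ p) * (1 - PowerSeries.X ^ q) := by
  have h := congrArg (fun g : ℤ[X] => (g : PowerSeries ℤ)) (P0 p q)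
  simpa [Polynomial.coe_mul, Polynomial.coe_sub, Polynomial.coe_one, Polynomial.coe_pow,
    Polynomial.coe_X] using h

private lemma Hmain (p q r : ℕ) (hp : p.Prime) (hq : q.Prime) (hr : r.Prime)
    (hpq : p < q) (hqr : q < r) (hsum : q + p ≤ p * q) :
    (cyclotomic (p * q * r) ℤ : PowerSeries ℤ)
      = (expand ℤ r (cyclotomic (p * q) ℤ) : PowerSeries ℤ) * G p q := by
  have hpq0 : 0 < p * q := Nat.mul_pos hp.pos hq.pos
  have hne : ((1 - PowerSeries.X ^ (p * q)) * (1 - PowerSeries.X) : PowerSeries ℤ) ≠ 0 := by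
    intro h
    have := congrArg (PowerSeries.constantCoeff (R := ℤ)) h
    simp [zero_pow hpq0.ne'] at this
  apply mul_right_cancel₀ hne
  have hc := congrArg (fun g : ℤ[X] => (g : PowerSeries ℤ))
    (P3 p q r hp hq hr hpq hqr)
  simp only [Polynomial.coe_mul, Polynomial.coe_sub, Polynomial.coe_one, Polynomial.coe_pow,
    Polynomial.coe_X] at hc
  rw [hc, show (expand ℤ r (cyclotomic (p*q) ℤ) : PowerSeries ℤ) * G p q
      * ((1 - PowerSeries.X ^ (p*q)) * (1 - PowerSeries.X))
      = (expand ℤ r (cyclotomic (p*q) ℤ) : PowerSeries ℤ)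
        * ((G p q * (1 - PowerSeries.X ^ (p*q))) * (1 - PowerSeries.X)) by ring,
    L1 p q hsum, L2]

private lemma natmod_eq (N a t : ℕ) (ht : t < N)
    (h : (a : ℤ) ≡ (t : ℤ) [ZMOD (N : ℤ)]) : a % N = t := by
  have h2 : a ≡ t [MOD N] := Int.natCast_modEq_iff.mp h
  have h3 : a % N = t % N := h2
  rwa [Nat.mod_eq_of_lt ht] at h3

private lemma intmod_of_natmod (N a t : ℕ) (h : a % N = t) :
    (a : ℤ) ≡ (t : ℤ) [ZMOD (N : ℤ)] := by
  have : a ≡ t [MOD N] := by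
    show a % N = t % N
    rw [← h, Nat.mod_mod_of_dvd a (dvd_refl N)]
  exact Int.natCast_modEq_iff.mpr this

private lemma kaplan_key (p q r : ℕ) (hp : p.Prime) (hq : q.Prime) (hr : r.Prime)
    (hpq : p < q) (hqr : q < r) (k t : ℕ) (ht : t < p * q)
    (ft : ℕ) (hft : ft < p * q)
    (hcong : (r : ℤ) * (ft : ℤ) ≡ (k : ℤ) - (t : ℤ) [ZMOD ((p : ℤ) * q)]) :
    (∑ uv ∈ Finset.HasAntidiagonal.antidiagonal k,
      (if r ∣ uv.1 then (cyclotomic (p * q) ℤ).coeff (uv.1 / r) else 0)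
        * (if uv.2 % (p * q) = t then 1 else 0))
      = if r * ft ≤ k then (cyclotomic (p * q) ℤ).coeff ft else 0 := by
  have hN1 : 1 < p * q := by nlinarith [hp.two_le, hq.two_le]
  have hNZ : ((p : ℤ) * q) = ((p * q : ℕ) : ℤ) := by push_cast; ring
  have hco : Nat.gcd (p * q) r = 1 := by
    have h1 : Nat.Coprime p r := (Nat.coprime_primes hp hr).mpr (by omega)
    have h2 : Nat.Coprime q r := (Nat.coprime_primes hq hr).mpr (by omega)
    exact Nat.Coprime.mul h1 h2
  rw [Finset.Nat.sum_antidiagonal_eq_sum_range_succ_mk]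
  have step : ∀ u ∈ Finset.range (k + 1),
      ((if r ∣ u then (cyclotomic (p * q) ℤ).coeff (u / r) else 0)
        * (if (k - u) % (p * q) = t then 1 else 0))
      = if u = r * ft then (cyclotomic (p * q) ℤ).coeff ft else 0 := by
    intro u hu
    have huk : u ≤ k := by
      have := Finset.mem_range.mp hu; omega
    by_cases h1 : u = r * ft
    · subst h1
      have hmod : (k - r * ft) % (p * q) = t := by
        apply natmod_eq _ _ _ ht
        rw [← hNZ]
        have h2 : ((k : ℤ) - (r * ft : ℕ)) ≡ (t : ℤ) [ZMOD ((p : ℤ) * q)] := by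
          push_cast
          have := (Int.ModEq.refl (k : ℤ)).sub hcong
          simpa using this
        rw [Nat.cast_sub huk]
        exact h2
      rw [if_pos (dvd_mul_right r ft), Nat.mul_div_cancel_left ft hr.pos,
        if_pos hmod, mul_one, if_pos rfl]
    · rw [if_neg h1]
      by_cases hd : r ∣ u
      · obtain ⟨i, rfl⟩ := hd
        by_cases h2 : (k - r * i) % (p * q) = t
        · rw [if_pos (dvd_mul_right r i), Nat.mul_div_cancel_left i hr.pos, if_pos h2,
            mul_one]
          by_cases h3 : i < p * q
          · exfalso
            apply h1
            have h4 : ((k - r * i : ℕ) : ℤ) ≡ (t : ℤ) [ZMOD ((p : ℤ) * q)] := by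
              rw [hNZ]; exact intmod_of_natmod _ _ _ h2
            rw [Nat.cast_sub huk] at h4
            push_cast at h4
            have h5 : (r : ℤ) * i ≡ (r : ℤ) * ft [ZMOD ((p : ℤ) * q)] := by
              have h6 : (r : ℤ) * i ≡ (k : ℤ) - t [ZMOD ((p : ℤ) * q)] := by
                have := (Int.ModEq.refl (k : ℤ)).sub h4
                simpa using this
              exact h6.trans hcong.symm
            have h7 : r * i ≡ r * ft [MOD p * q] := by
              apply Int.natCast_modEq_iff.mp
              push_cast
              exact h5
            have h8 : i ≡ ft [MOD p * q] := Nat.ModEq.cancel_left_of_coprime hco h7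
            have h9 : i % (p * q) = ft % (p * q) := h8
            rw [Nat.mod_eq_of_lt h3, Nat.mod_eq_of_lt hft] at h9
            rw [h9]
          · apply coeff_eq_zero_of_natDegree_lt
            rw [natDegree_cyclotomic]
            have := Nat.totient_lt (p * q) hN1
            omega
        · rw [if_neg h2, mul_zero]
      · rw [if_neg hd, zero_mul]
  rw [Finset.sum_congr rfl step,
    Finset.sum_ite_eq' (Finset.range (k + 1)) (r * ft)
      (fun _ => (cyclotomic (p * q) ℤ).coeff ft)]
  simp [Finset.mem_range, Nat.lt_succ_iff]

/-- Kaplan's Lemma: for primes `2 < p < q < r` and `k ≥ 0`, with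
`b i = a_{pq}(i)` if `r·i ≤ k` and `0` otherwise, and `f m` the unique residue
mod `pq` of `r⁻¹(k - m)`, we have
`a_{pqr}(k) = ∑_{m=0}^{p-1} (b_{f(m)} - b_{f(m+q)})`. -/
theorem stmt_3 (p q r : ℕ) (hp : p.Prime) (hq : q.Prime) (hr : r.Prime)
    (h2p : 2 < p) (hpq : p < q) (hqr : q < r) (k : ℕ)
    (b : ℕ → ℤ)
    (hb : ∀ i : ℕ, b i = if r * i ≤ k then (cyclotomic (p * q) ℤ).coeff i else 0)
    (f : ℕ → ℕ)
    (hf : ∀ m : ℕ, f m < p * q ∧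
      (r : ℤ) * (f m : ℤ) ≡ (k : ℤ) - (m : ℤ) [ZMOD ((p : ℤ) * q)]) :
    (cyclotomic (p * q * r) ℤ).coeff k
      = ∑ m ∈ Finset.range p, (b (f m) - b (f (m + q))) := by
  have hsum : q + p ≤ p * q := by nlinarith [hp.two_le, hq.two_le]
  have hcoeff : (cyclotomic (p * q * r) ℤ).coeff k
      = ∑ uv ∈ Finset.HasAntidiagonal.antidiagonal k,
          (if r ∣ uv.1 then (cyclotomic (p * q) ℤ).coeff (uv.1 / r) else 0)
            * Dc p q (uv.2 % (p * q)) := by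
    have h1 : (cyclotomic (p * q * r) ℤ).coeff k
        = PowerSeries.coeff (R := ℤ) k (cyclotomic (p * q * r) ℤ : PowerSeries ℤ) :=
      (Polynomial.coeff_coe _ _).symm
    rw [h1, Hmain p q r hp hq hr hpq hqr hsum, PowerSeries.coeff_mul]
    refine Finset.sum_congr rfl fun uv _ => ?_
    rw [Polynomial.coeff_coe, coeff_expand hr.pos]
    simp only [G, PowerSeries.coeff_mk]
  rw [hcoeff]
  simp_rw [Dc_sum p q, Finset.mul_sum, mul_sub]
  rw [Finset.sum_comm]
  refine Finset.sum_congr rfl fun m hm => ?_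
  have hm' : m < p := Finset.mem_range.mp hm
  rw [Finset.sum_sub_distrib]
  rw [kaplan_key p q r hp hq hr hpq hqr k m (by omega) (f m) (hf m).1 (hf m).2,
    kaplan_key p q r hp hq hr hpq hqr k (m + q) (by omega) (f (m + q)) (hf (m + q)).1
      (by push_cast; exact (hf (m + q)).2),
    hb (f m), hb (f (m + q))]
end

section
/- Let p < q be odd primes and let ρ and σ be the unique non-negative integers with 1 + pq = (ρ+1)p + (σ+1)q. Let 0 ≤ m < pq, let α₁ be the unique integer with 0 ≤ α₁ ≤ q-1 and α₁ p ≡ m (mod q), and let β₁ be the unique integer with 0 ≤ β₁ ≤ p-1 and β₁ q ≡ m (mod p). Then either m = α₁ p + β₁ q or m = α₁ p + β₁ q - pq, and the coefficient a_{pq}(m) equals 1 if m = α₁ p + β₁ q with 0 ≤ α₁ ≤ ρ and 0 ≤ β₁ ≤ σ; it equals -1 if m = α₁ p + β₁ q - pq with ρ+1 ≤ α₁ ≤ q-1 and σ+1 ≤ β₁ ≤ p-1; and it equals 0 otherwise. -/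
open Polynomial Finset

-- double-sum indicator helpers
lemma LL.sumsum_zero {a b n : ℕ} (e : ℕ → ℕ → ℕ)
    (h : ∀ i < a, ∀ j < b, e i j ≠ n) :
    (∑ i ∈ Finset.range a, ∑ j ∈ Finset.range b,
      (if n = e i j then (1:ℤ) else 0)) = 0 := by
  apply Finset.sum_eq_zero; intro i hi
  apply Finset.sum_eq_zero; intro j hj
  rw [if_neg]
  exact fun hn => h i (Finset.mem_range.1 hi) j (Finset.mem_range.1 hj) hn.symm

lemma LL.sumsum_one {a b n i₀ j₀ : ℕ} (e : ℕ → ℕ → ℕ)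
    (hi : i₀ < a) (hj : j₀ < b) (he : e i₀ j₀ = n)
    (hu : ∀ i < a, ∀ j < b, e i j = n → i = i₀ ∧ j = j₀) :
    (∑ i ∈ Finset.range a, ∑ j ∈ Finset.range b,
      (if n = e i j then (1:ℤ) else 0)) = 1 := by
  rw [Finset.sum_eq_single i₀]
  · rw [Finset.sum_eq_single j₀]
    · rw [if_pos he.symm]
    · intro j hj' hne
      rw [if_neg]
      exact fun hn => hne ((hu i₀ hi j (Finset.mem_range.1 hj') hn.symm).2)
    · intro h; exact absurd (Finset.mem_range.2 hj) h
  · intro i hi' hne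
    apply Finset.sum_eq_zero; intro j hj'
    rw [if_neg]
    exact fun hn => hne ((hu i (Finset.mem_range.1 hi') j (Finset.mem_range.1 hj') hn.symm).1)
  · intro h; exact absurd (Finset.mem_range.2 hi) h

-- the product expansion
lemma LL.prod_expand (p q a b : ℕ) :
    ((∑ i ∈ Finset.range a, (X:ℤ[X]) ^ (p * i)) * ∑ j ∈ Finset.range b, (X:ℤ[X]) ^ (q * j))
      = ∑ i ∈ Finset.range a, ∑ j ∈ Finset.range b, (X:ℤ[X]) ^ (p * i + q * j) := by
  rw [Finset.sum_mul_sum]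
  simp only [← pow_add]

lemma LL.prod_expand' (p q a b : ℕ) :
    (X:ℤ[X]) * ((∑ i ∈ Finset.range a, (X:ℤ[X]) ^ (p * i)) *
        ∑ j ∈ Finset.range b, (X:ℤ[X]) ^ (q * j))
      = ∑ i ∈ Finset.range a, ∑ j ∈ Finset.range b, (X:ℤ[X]) ^ (p * i + q * j + 1) := by
  rw [LL.prod_expand, Finset.mul_sum]
  refine Finset.sum_congr rfl fun i _ => ?_
  rw [Finset.mul_sum]
  refine Finset.sum_congr rfl fun j _ => ?_
  rw [← pow_succ']

lemma LL.geom (p a : ℕ) :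
    (∑ i ∈ Finset.range a, (X:ℤ[X]) ^ (p * i)) * ((X:ℤ[X]) ^ p - 1) = X ^ (p * a) - 1 := by
  have := geom_sum_mul ((X:ℤ[X]) ^ p) a
  simpa only [← pow_mul, mul_comm] using this

lemma LL.cyclo_eq (p q : ℕ) (hp : p.Prime) (hq : q.Prime) (hpq : p < q)
    (ρ σ : ℕ) (hρσ : 1 + p * q = (ρ + 1) * p + (σ + 1) * q) :
    cyclotomic (p * q) ℤ =
      (∑ i ∈ Finset.range (ρ + 1), (X:ℤ[X]) ^ (p * i)) *
        (∑ j ∈ Finset.range (σ + 1), (X:ℤ[X]) ^ (q * j)) -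
      X * ((∑ i ∈ Finset.range (q - 1 - ρ), (X:ℤ[X]) ^ (p * i)) *
        (∑ j ∈ Finset.range (p - 1 - σ), (X:ℤ[X]) ^ (q * j))) := by
  have hp2 := hp.two_le
  have hq2 := hq.two_le
  have hρq : ρ + 1 < q := by
    have h1 : (ρ + 1) * p < q * p := by
      have h2 : 1 * q ≤ (σ + 1) * q := Nat.mul_le_mul_right q (by omega)
      have : q * p = p * q := Nat.mul_comm q p
      omega
    exact Nat.lt_of_mul_lt_mul_right h1
  have hσp : σ + 1 < p := by
    have h1 : (σ + 1) * q < p * q := by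
      have h2 : 1 * p ≤ (ρ + 1) * p := Nat.mul_le_mul_right p (by omega)
      omega
    exact Nat.lt_of_mul_lt_mul_right h1
  -- the candidate polynomial
  set A : ℤ[X] := ∑ i ∈ Finset.range (ρ + 1), (X:ℤ[X]) ^ (p * i) with hA
  set B : ℤ[X] := ∑ j ∈ Finset.range (σ + 1), (X:ℤ[X]) ^ (q * j) with hB
  set C : ℤ[X] := ∑ i ∈ Finset.range (q - 1 - ρ), (X:ℤ[X]) ^ (p * i) with hC
  set D : ℤ[X] := ∑ j ∈ Finset.range (p - 1 - σ), (X:ℤ[X]) ^ (q * j) with hD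
  set P : ℤ[X] := A * B - X * (C * D) with hP
  have hApq : p * (ρ + 1) + q * (σ + 1) = p * q + 1 := by
    have := hρσ; ring_nf at this ⊢; omega
  have hM : ((X:ℤ[X]) ^ p - 1) * ((X:ℤ[X]) ^ q - 1) ≠ 0 := by
    have h1 : ((X:ℤ[X]) ^ p - 1) ≠ 0 := by
      have := X_pow_sub_C_ne_zero (R := ℤ) hp.pos 1
      simpa using this
    have h2 : ((X:ℤ[X]) ^ q - 1) ≠ 0 := by
      have := X_pow_sub_C_ne_zero (R := ℤ) hq.pos 1
      simpa using this
    exact mul_ne_zero h1 h2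
  apply mul_right_cancel₀ hM
  -- LHS: cyclotomic side
  have hafact : Fact p.Prime := ⟨hp⟩
  have hbfact : Fact q.Prime := ⟨hq⟩
  have hd : (p * q).divisors = {1, p, q, p * q} := by
    rw [Nat.divisors_mul, hp.divisors, hq.divisors]
    ext d
    simp only [Finset.mem_mul, Finset.mem_insert, Finset.mem_singleton]
    constructor
    · rintro ⟨a, (rfl | rfl), b, (rfl | rfl), rfl⟩ <;> simp
    · rintro (h | h | h | h)
      · exact ⟨1, Or.inl rfl, 1, Or.inl rfl, by omega⟩
      · exact ⟨p, Or.inr rfl, 1, Or.inl rfl, by omega⟩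
      · exact ⟨1, Or.inl rfl, q, Or.inr rfl, by omega⟩
      · exact ⟨p, Or.inr rfl, q, Or.inr rfl, h.symm⟩
  have hplt : p < p * q := (Nat.lt_mul_iff_one_lt_right hp.pos).2 (by omega)
  have hqlt : q < p * q := by
    exact (Nat.lt_mul_iff_one_lt_left hq.pos).2 (by omega)
  have hprod : (X:ℤ[X]) ^ (p * q) - 1 =
      (X - 1) * cyclotomic p ℤ * cyclotomic q ℤ * cyclotomic (p * q) ℤ := by
    rw [← prod_cyclotomic_eq_X_pow_sub_one (Nat.mul_pos hp.pos hq.pos) ℤ, hd]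
    rw [Finset.prod_insert (by simp; omega), Finset.prod_insert (by simp; omega),
      Finset.prod_insert (by simp; omega), Finset.prod_singleton, cyclotomic_one]
    ring
  have hXp : cyclotomic p ℤ * (X - 1) = X ^ p - 1 := cyclotomic_prime_mul_X_sub_one ℤ p
  have hXq : cyclotomic q ℤ * (X - 1) = X ^ q - 1 := cyclotomic_prime_mul_X_sub_one ℤ q
  -- RHS: candidate side, via geometric sums
  have gA : A * ((X:ℤ[X]) ^ p - 1) = X ^ (p * (ρ + 1)) - 1 := LL.geom p (ρ + 1)
  have gB : B * ((X:ℤ[X]) ^ q - 1) = X ^ (q * (σ + 1)) - 1 := LL.geom q (σ + 1)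
  have gC : C * ((X:ℤ[X]) ^ p - 1) = X ^ (p * (q - 1 - ρ)) - 1 := LL.geom p (q - 1 - ρ)
  have gD : D * ((X:ℤ[X]) ^ q - 1) = X ^ (q * (p - 1 - σ)) - 1 := LL.geom q (p - 1 - σ)
  set a := p * (ρ + 1) with ha
  set b := q * (σ + 1) with hb
  set a' := p * (q - 1 - ρ) with ha'
  set b' := q * (p - 1 - σ) with hb'
  have hab : a + b = p * q + 1 := hApq
  have haa' : a + a' = p * q := by
    rw [ha, ha', ← Nat.mul_add]
    congr 1
    omega
  have hbb' : b + b' = p * q := by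
    rw [hb, hb', ← Nat.mul_add]
    have : (σ + 1) + (p - 1 - σ) = p := by omega
    rw [this, Nat.mul_comm]
  -- key exponent identities
  have h1 : (X:ℤ[X]) ^ a * X ^ b = X ^ (p * q) * X := by
    rw [← pow_add, hab, pow_succ]
  have h2 : (X:ℤ[X]) * X ^ a' * X ^ b' = X ^ (p * q) := by
    rw [mul_assoc, ← pow_add, ← pow_succ']
    congr 1
    omega
  have h3 : (X:ℤ[X]) * X ^ a' = X ^ b := by
    rw [← pow_succ']
    congr 1
    omega
  have h4 : (X:ℤ[X]) * X ^ b' = X ^ a := by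
    rw [← pow_succ']
    congr 1
    omega
  calc cyclotomic (p * q) ℤ * (((X:ℤ[X]) ^ p - 1) * ((X:ℤ[X]) ^ q - 1))
      = (X ^ (p * q) - 1) * (X - 1) := by
        rw [← hXp, ← hXq, hprod]; ring
    _ = (X ^ a - 1) * (X ^ b - 1) - X * ((X ^ a' - 1) * (X ^ b' - 1)) := by
        linear_combination -h1 + h2 - h3 - h4
    _ = P * (((X:ℤ[X]) ^ p - 1) * ((X:ℤ[X]) ^ q - 1)) := by
        rw [hP]
        linear_combination (-(B * ((X:ℤ[X]) ^ q - 1))) * gA - ((X:ℤ[X]) ^ a - 1) * gB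
          + (X * D * ((X:ℤ[X]) ^ q - 1)) * gC + (X * ((X:ℤ[X]) ^ a' - 1)) * gD

set_option maxHeartbeats 2000000 in
/-- Coefficients of binary cyclotomic polynomials (Lam–Leung). -/
theorem stmt_4 (p q : ℕ) (hp : p.Prime) (hq : q.Prime)
    (hpodd : Odd p) (hqodd : Odd q) (hpq : p < q)
    (ρ σ : ℕ) (hρσ : 1 + p * q = (ρ + 1) * p + (σ + 1) * q)
    (m : ℕ) (hm : m < p * q)
    (α₁ : ℕ) (hα₁ : α₁ ≤ q - 1) (hα₁' : α₁ * p ≡ m [MOD q])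
    (β₁ : ℕ) (hβ₁ : β₁ ≤ p - 1) (hβ₁' : β₁ * q ≡ m [MOD p]) :
    ((m : ℤ) = α₁ * p + β₁ * q ∨ (m : ℤ) = α₁ * p + β₁ * q - p * q) ∧
    (cyclotomic (p * q) ℤ).coeff m =
      if (m : ℤ) = (α₁ : ℤ) * p + β₁ * q ∧ α₁ ≤ ρ ∧ β₁ ≤ σ then 1
      else if (m : ℤ) = (α₁ : ℤ) * p + β₁ * q - p * q ∧ ρ + 1 ≤ α₁ ∧ σ + 1 ≤ β₁ then -1
      else 0 := by
  have hp2 := hp.two_le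
  have hq2 := hq.two_le
  have hρq : ρ + 1 < q := by
    have h1 : (ρ + 1) * p < q * p := by
      have h2 : 1 * q ≤ (σ + 1) * q := Nat.mul_le_mul_right q (by omega)
      have : q * p = p * q := Nat.mul_comm q p
      omega
    exact Nat.lt_of_mul_lt_mul_right h1
  have hσp : σ + 1 < p := by
    have h1 : (σ + 1) * q < p * q := by
      have h2 : 1 * p ≤ (ρ + 1) * p := Nat.mul_le_mul_right p (by omega)
      omega
    exact Nat.lt_of_mul_lt_mul_right h1
  have hα₁q : α₁ < q := by omega
  have hβ₁p : β₁ < p := by omega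
  have hpqpos : (0:ℤ) < (p:ℤ) * q := by positivity
  have hcop : IsCoprime (p:ℤ) (q:ℤ) :=
    Nat.isCoprime_iff_coprime.2 ((Nat.coprime_primes hp hq).2 hpq.ne)
  have hqd : (q:ℤ) ∣ (m:ℤ) - α₁ * p := by
    have := Nat.modEq_iff_dvd.1 hα₁'
    push_cast at this
    exact this
  have hpd : (p:ℤ) ∣ (m:ℤ) - β₁ * q := by
    have := Nat.modEq_iff_dvd.1 hβ₁'
    push_cast at this
    exact this
  have h1int : (1:ℤ) = (ρ + 1) * p + (σ + 1) * q - p * q := by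
    have := hρσ
    zify at this
    linarith
  -- the representation
  have hrep : (m : ℤ) = α₁ * p + β₁ * q ∨ (m : ℤ) = α₁ * p + β₁ * q - p * q := by
    have hdvd : (p:ℤ) * q ∣ ((α₁:ℤ) * p + β₁ * q - m) := by
      apply hcop.mul_dvd
      · have h : (α₁:ℤ) * p + β₁ * q - m = (p:ℤ) * α₁ - ((m:ℤ) - β₁ * q) := by ring
        rw [h]
        exact dvd_sub (Dvd.intro _ rfl) hpd
      · have h : (α₁:ℤ) * p + β₁ * q - m = (q:ℤ) * β₁ - ((m:ℤ) - α₁ * p) := by ring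
        rw [h]
        exact dvd_sub (Dvd.intro _ rfl) hqd
    obtain ⟨k, hk⟩ := hdvd
    have hb1 : (α₁:ℤ) * p + β₁ * q < 2 * ((p:ℤ) * q) := by
      have h1 : (α₁:ℤ) + 1 ≤ q := by exact_mod_cast hα₁q
      have h2 : (β₁:ℤ) + 1 ≤ p := by exact_mod_cast hβ₁p
      have h3 : (0:ℤ) < p := by exact_mod_cast hp.pos
      have h4 : (0:ℤ) < q := by exact_mod_cast hq.pos
      nlinarith
    have hb2 : (0:ℤ) ≤ (α₁:ℤ) * p + β₁ * q := by positivity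
    have hmz : (m:ℤ) < (p:ℤ) * q := by exact_mod_cast hm
    have hm0 : (0:ℤ) ≤ (m:ℤ) := Int.natCast_nonneg m
    have hk0 : 0 ≤ k := by nlinarith
    have hk1 : k ≤ 1 := by nlinarith
    have : k = 0 ∨ k = 1 := by omega
    rcases this with rfl | rfl
    · left; linarith
    · right; linarith
  refine ⟨hrep, ?_⟩
  -- key uniqueness tool
  have hqZ : (q:ℤ) ≠ 0 := by exact_mod_cast hq.pos.ne'
  have keyα : ∀ i' : ℕ, i' < q → (q:ℤ) ∣ (m:ℤ) - p * i' → i' = α₁ := by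
    intro i' hi' hdvd
    have h2 : (q:ℤ) ∣ (p:ℤ) * ((i':ℤ) - α₁) := by
      have h : (p:ℤ) * ((i':ℤ) - α₁) = ((m:ℤ) - α₁ * p) - ((m:ℤ) - p * i') := by ring
      rw [h]
      exact dvd_sub hqd hdvd
    have h3 : (q:ℤ) ∣ ((i':ℤ) - α₁) := (hcop.symm).dvd_of_dvd_mul_left h2
    have h4 : (i':ℤ) - α₁ = 0 := by
      apply Int.eq_zero_of_abs_lt_dvd h3
      rw [abs_lt]
      constructor <;> [omega; omega]
    omega
  -- the coefficient as a difference of two indicator sums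
  have hcoeff : (cyclotomic (p * q) ℤ).coeff m =
      (∑ i ∈ Finset.range (ρ + 1), ∑ j ∈ Finset.range (σ + 1),
        (if m = p * i + q * j then (1:ℤ) else 0)) -
      (∑ i ∈ Finset.range (q - 1 - ρ), ∑ j ∈ Finset.range (p - 1 - σ),
        (if m = p * i + q * j + 1 then (1:ℤ) else 0)) := by
    rw [LL.cyclo_eq p q hp hq hpq ρ σ hρσ, coeff_sub, LL.prod_expand, LL.prod_expand']
    simp only [finset_sum_coeff, coeff_X_pow]
  -- case analysis on the representation
  rcases hrep with hcase | hcase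
  · -- m = α₁ p + β₁ q
    have hne2 : ¬ ((m : ℤ) = (α₁ : ℤ) * p + β₁ * q - p * q) := by
      intro h
      rw [hcase] at h
      linarith
    have hS2 : (∑ i ∈ Finset.range (q - 1 - ρ), ∑ j ∈ Finset.range (p - 1 - σ),
        (if m = p * i + q * j + 1 then (1:ℤ) else 0)) = 0 := by
      apply LL.sumsum_zero
      intro i hi j hj heq
      -- from p i + q j + 1 = m derive contradiction
      have hmint : (m:ℤ) = p * (i + ρ + 1) + q * (j + σ + 1) - p * q := by
        rw [← heq]
        push_cast
        linarith [h1int]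
      have hiq : i + ρ + 1 < q := by omega
      have hdvd : (q:ℤ) ∣ (m:ℤ) - p * (i + ρ + 1 : ℕ) := by
        refine ⟨(j:ℤ) + σ + 1 - p, ?_⟩
        push_cast
        rw [hmint]
        push_cast
        ring
      have hieq := keyα (i + ρ + 1) hiq hdvd
      -- now β₁ = j + σ + 1 - p < 0, contradiction
      have hieq' : (i:ℤ) + ρ + 1 = (α₁:ℤ) := by exact_mod_cast hieq
      have hpi : (p:ℤ) * ((i:ℤ) + ρ + 1) = p * α₁ := by rw [hieq']
      have hqβ : (q:ℤ) * β₁ = q * ((j:ℤ) + σ + 1 - p) := by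
        rw [hcase] at hmint
        linarith
      have := mul_left_cancel₀ hqZ hqβ
      omega
    have hS1 : (∑ i ∈ Finset.range (ρ + 1), ∑ j ∈ Finset.range (σ + 1),
        (if m = p * i + q * j then (1:ℤ) else 0)) =
        if α₁ ≤ ρ ∧ β₁ ≤ σ then 1 else 0 := by
      have huniq : ∀ i < ρ + 1, ∀ j < σ + 1, p * i + q * j = m → i = α₁ ∧ j = β₁ := by
        intro i hi j hj heq
        have hiq : i < q := by omega
        have hdvd : (q:ℤ) ∣ (m:ℤ) - p * i := by
          refine ⟨(j:ℤ), ?_⟩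
          rw [← heq]
          push_cast
          ring
        have hieq := keyα i hiq hdvd
        refine ⟨hieq, ?_⟩
        have hqβ : (q:ℤ) * j = q * (β₁:ℤ) := by
          have h5 : (m:ℤ) = p * i + q * j := by rw [← heq]; push_cast; ring
          rw [hcase, hieq] at h5
          linarith
        have := mul_left_cancel₀ hqZ hqβ
        omega
      by_cases hcond : α₁ ≤ ρ ∧ β₁ ≤ σ
      · rw [if_pos hcond]
        refine LL.sumsum_one (n := m) (i₀ := α₁) (j₀ := β₁)
          (fun i j => p * i + q * j) (by omega) (by omega) ?_ huniq
        have h5 : (m:ℤ) = ↑(p * α₁ + q * β₁) := by push_cast; rw [hcase]; ring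
        exact_mod_cast h5.symm
      · rw [if_neg hcond]
        apply LL.sumsum_zero
        intro i hi j hj heq
        obtain ⟨h6, h7⟩ := huniq i hi j hj heq
        exact hcond ⟨by omega, by omega⟩
    rw [hcoeff, hS1, hS2]
    by_cases hcond : α₁ ≤ ρ ∧ β₁ ≤ σ
    · rw [if_pos hcond, if_pos ⟨hcase, hcond⟩]
      ring
    · rw [if_neg hcond, if_neg (fun h => hcond h.2), if_neg (fun h => hne2 h.1)]
      ring
  · -- m = α₁ p + β₁ q - p q
    have hne1 : ¬ ((m : ℤ) = (α₁ : ℤ) * p + β₁ * q) := by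
      intro h
      rw [hcase] at h
      linarith
    have hS1 : (∑ i ∈ Finset.range (ρ + 1), ∑ j ∈ Finset.range (σ + 1),
        (if m = p * i + q * j then (1:ℤ) else 0)) = 0 := by
      apply LL.sumsum_zero
      intro i hi j hj heq
      have hiq : i < q := by omega
      have hdvd : (q:ℤ) ∣ (m:ℤ) - p * i := by
        refine ⟨(j:ℤ), ?_⟩
        rw [← heq]
        push_cast
        ring
      have hieq := keyα i hiq hdvd
      have hqβ : (q:ℤ) * j = q * ((β₁:ℤ) - p) := by
        have h5 : (m:ℤ) = p * i + q * j := by rw [← heq]; push_cast; ring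
        rw [hcase, hieq] at h5
        push_cast at h5
        linarith
      have := mul_left_cancel₀ hqZ hqβ
      omega
    have hS2 : (∑ i ∈ Finset.range (q - 1 - ρ), ∑ j ∈ Finset.range (p - 1 - σ),
        (if m = p * i + q * j + 1 then (1:ℤ) else 0)) =
        if ρ + 1 ≤ α₁ ∧ σ + 1 ≤ β₁ then 1 else 0 := by
      have huniq : ∀ i < q - 1 - ρ, ∀ j < p - 1 - σ, p * i + q * j + 1 = m →
          i + ρ + 1 = α₁ ∧ j + σ + 1 = β₁ := by
        intro i hi j hj heq
        have hmint : (m:ℤ) = p * (i + ρ + 1) + q * (j + σ + 1) - p * q := by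
          rw [← heq]
          push_cast
          linarith [h1int]
        have hiq : i + ρ + 1 < q := by omega
        have hdvd : (q:ℤ) ∣ (m:ℤ) - p * (i + ρ + 1 : ℕ) := by
          refine ⟨(j:ℤ) + σ + 1 - p, ?_⟩
          push_cast
          rw [hmint]
          push_cast
          ring
        have hieq := keyα (i + ρ + 1) hiq hdvd
        refine ⟨hieq, ?_⟩
        have hieq' : (i:ℤ) + ρ + 1 = (α₁:ℤ) := by exact_mod_cast hieq
        have hpi : (p:ℤ) * ((i:ℤ) + ρ + 1) = p * α₁ := by rw [hieq']
        have hqβ : (q:ℤ) * ((j:ℤ) + σ + 1) = q * (β₁:ℤ) := by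
          rw [hcase] at hmint
          linarith
        have := mul_left_cancel₀ hqZ hqβ
        omega
      by_cases hcond : ρ + 1 ≤ α₁ ∧ σ + 1 ≤ β₁
      · rw [if_pos hcond]
        obtain ⟨hc1, hc2⟩ := hcond
        obtain ⟨u, hu⟩ : ∃ u, α₁ = u + ρ + 1 := ⟨α₁ - ρ - 1, by omega⟩
        obtain ⟨v, hv⟩ : ∃ v, β₁ = v + σ + 1 := ⟨β₁ - σ - 1, by omega⟩
        refine LL.sumsum_one (n := m) (i₀ := u) (j₀ := v)
          (fun i j => p * i + q * j + 1) (by omega) (by omega) ?_ ?_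
        · -- p u + q v + 1 = m
          have h5 : (m:ℤ) = ↑(p * u + q * v + 1) := by
            rw [hcase, hu, hv]
            push_cast
            linarith [h1int]
          exact_mod_cast h5.symm
        · intro i hi j hj heq
          obtain ⟨h6, h7⟩ := huniq i hi j hj heq
          omega
      · rw [if_neg hcond]
        apply LL.sumsum_zero
        intro i hi j hj heq
        obtain ⟨h6, h7⟩ := huniq i hi j hj heq
        exact hcond ⟨by omega, by omega⟩
    rw [hcoeff, hS1, hS2]
    by_cases hcond : ρ + 1 ≤ α₁ ∧ σ + 1 ≤ β₁
    · rw [if_pos hcond, if_neg (fun h => hne1 h.1), if_pos ⟨hcase, hcond⟩]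
      ring
    · rw [if_neg hcond, if_neg (fun h => hne1 h.1), if_neg (fun h => hcond h.2)]
      ring
end

section
/- Let l ≥ 1 be an odd integer, let p ≥ l² + 3l + 5 be a prime, and let a be the integer with 0 ≤ a ≤ p-1 and (l+2)a ≡ 2 (mod p). Then a lies in the union of intervals [l+2, (p-l-2)/2] ∪ [(p+l+2)/2, p-l-2]. -/
/-- If `(l+2)a ≡ 2 (mod p)` with `0 ≤ a ≤ p-1`, `l ≥ 1` odd and `p ≥ l²+3l+5`
prime, then `a ∈ [l+2, (p-l-2)/2] ∪ [(p+l+2)/2, p-l-2]`. -/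
theorem stmt_5 (l : ℤ) (hl : 1 ≤ l) (hlodd : Odd l)
    (p : ℕ) (hp : p.Prime) (hpl : l ^ 2 + 3 * l + 5 ≤ (p : ℤ))
    (a : ℤ) (ha0 : 0 ≤ a) (ha1 : a ≤ (p : ℤ) - 1)
    (ha : (l + 2) * a ≡ 2 [ZMOD (p : ℤ)]) :
    a ∈ Set.Icc (l + 2) (((p : ℤ) - l - 2) / 2)
      ∪ Set.Icc (((p : ℤ) + l + 2) / 2) ((p : ℤ) - l - 2) := by
  obtain ⟨k, hk⟩ := ha.dvd
  -- hk : 2 - (l+2)*a = p * k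
  obtain ⟨s, hs⟩ := hlodd
  have hp2 : p ≠ 2 := by
    intro h; rw [h] at hpl; norm_num at hpl; nlinarith
  obtain ⟨t, ht⟩ := hp.odd_of_ne_two hp2
  have htZ : (p : ℤ) = 2 * (t : ℤ) + 1 := by exact_mod_cast congrArg (Nat.cast : ℕ → ℤ) ht
  have hl2 : (3 : ℤ) ≤ l + 2 := by linarith
  have hpbig : (9 : ℤ) ≤ (p : ℤ) := by nlinarith
  -- k ≤ -1
  have hk1 : k ≤ -1 := by
    by_contra h
    push_neg at h
    have h0 : 0 ≤ k := by omega
    have hpk : 0 ≤ (p : ℤ) * k := mul_nonneg (by positivity) h0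
    have haz : a ≤ 0 := by nlinarith
    have ha0' : a = 0 := le_antisymm haz ha0
    rcases (by omega : k = 0 ∨ 1 ≤ k) with h' | h'
    · rw [ha0', h'] at hk; norm_num at hk
    · rw [ha0'] at hk; nlinarith
  -- -(l+1) ≤ k
  have hk2 : -(l + 1) ≤ k := by
    by_contra h
    push_neg at h
    have h' : k ≤ -(l + 2) := by omega
    nlinarith
  -- lower bound
  have hal : l + 2 ≤ a := by
    by_contra h
    push_neg at h
    have h' : a ≤ l + 1 := by omega
    nlinarith
  -- upper bound
  have hau : a ≤ (p : ℤ) - l - 2 := by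
    by_contra h
    push_neg at h
    have h' : (p : ℤ) - l - 1 ≤ a := by omega
    nlinarith
  -- gap
  have hgap : a ≤ (t : ℤ) - s - 1 ∨ (t : ℤ) + s + 2 ≤ a := by
    by_contra h
    push_neg at h
    obtain ⟨h1, h2⟩ := h
    have hb1 : -l ≤ 2 * a - (p : ℤ) := by omega
    have hb2 : 2 * a - (p : ℤ) ≤ l := by omega
    have heq : (l + 2) * (2 * a - (p : ℤ)) - 4 = (p : ℤ) * (-2 * k - l - 2) := by
      linear_combination (-2 : ℤ) * hk
    have hcne : -2 * k - l - 2 ≠ 0 := by omega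
    rcases (by omega : 1 ≤ -2 * k - l - 2 ∨ -2 * k - l - 2 ≤ -1) with hc | hc
    · have hpc : (p : ℤ) ≤ (p : ℤ) * (-2 * k - l - 2) := le_mul_of_one_le_right (by positivity) hc
      nlinarith [mul_le_mul_of_nonneg_left hb2 (by linarith : (0:ℤ) ≤ l + 2)]
    · have hpc : (p : ℤ) * (-2 * k - l - 2) ≤ -(p : ℤ) := by nlinarith
      nlinarith [mul_le_mul_of_nonneg_left hb1 (by linarith : (0:ℤ) ≤ l + 2)]
  simp only [Set.mem_union, Set.mem_Icc]
  omega
end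

section
/- Let l ≥ 1 be an odd integer and let 2 < p < q be primes with q ≥ (p+l)p/2 and (l+2)q ≡ 2 (mod p). Let ρ, σ be the non-negative integers with 1 + pq = (ρ+1)p + (σ+1)q, put s = ⌊2ρ/(p+l)⌋ and τ = ρ - s(p+l)/2. Let r₁ > pq be a prime with r₁(q - sp) ≡ -1 (mod pq). Let w be the integer with 0 ≤ w ≤ p-1 and w(l+2) ≡ 2 (mod p), and assume l+2 ≤ w ≤ (p-l-2)/2. Put α₁⁻ = (ρ+s)p - q, u₁⁻ = -(p-l-2)q/2 + ((p-1)s + τ)p, t₁⁻ = ⌊(α₁⁻ - u₁⁻)r₁/(pq)⌋ + 1 and k₁⁻ = u₁⁻ r₁ + t₁⁻ pq. Then a_{p q r₁}(k₁⁻) = -(p-l-2)/2. -/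
open Polynomial Finset

lemma my_divisors_pq {p q : ℕ} (hp : p.Prime) (hq : q.Prime) (hpq : p < q) :
    (p * q).divisors = {1, p, q, p * q} := by
  rw [Nat.divisors_mul, hp.divisors, hq.divisors]
  ext d
  simp only [Finset.mem_mul, Finset.mem_insert, Finset.mem_singleton]
  constructor
  · rintro ⟨a, ha, b, hb, rfl⟩
    rcases ha with rfl | rfl <;> rcases hb with rfl | rfl <;> simp
  · rintro (rfl | rfl | rfl | rfl)
    · exact ⟨1, Or.inl rfl, 1, Or.inl rfl, rfl⟩
    · exact ⟨d, Or.inr rfl, 1, Or.inl rfl, mul_one d⟩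
    · exact ⟨1, Or.inl rfl, d, Or.inr rfl, one_mul d⟩
    · exact ⟨p, Or.inr rfl, q, Or.inr rfl, rfl⟩

lemma my_bin_id {p q : ℕ} (hp : p.Prime) (hq : q.Prime) (hpq : p < q) :
    cyclotomic (p * q) ℤ * ((X ^ p - 1) * (X ^ q - 1)) = (X - 1) * (X ^ (p * q) - 1) := by
  have h1p : 1 < p := hp.one_lt
  have h1q : 1 < q := hq.one_lt
  have hpqpos : 0 < p * q := Nat.mul_pos hp.pos hq.pos
  have hplt : p < p * q := by nlinarith
  have hqlt : q < p * q := by nlinarith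
  have e1 : (X : ℤ[X]) ^ p - 1 = ∏ i ∈ p.divisors, cyclotomic i ℤ :=
    (prod_cyclotomic_eq_X_pow_sub_one hp.pos ℤ).symm
  have e2 : (X : ℤ[X]) ^ q - 1 = ∏ i ∈ q.divisors, cyclotomic i ℤ :=
    (prod_cyclotomic_eq_X_pow_sub_one hq.pos ℤ).symm
  have e3 : (X : ℤ[X]) ^ (p * q) - 1 = ∏ i ∈ (p * q).divisors, cyclotomic i ℤ :=
    (prod_cyclotomic_eq_X_pow_sub_one hpqpos ℤ).symm
  have hd : (p * q).divisors = {1, p, q, p * q} := my_divisors_pq hp hq hpq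
  rw [e1, e2, e3, hd, hp.divisors, hq.divisors]
  rw [show ({1, p, q, p*q} : Finset ℕ) = insert 1 (insert p (insert q ({p*q} : Finset ℕ))) from rfl,
      Finset.prod_insert (by simp; omega),
      Finset.prod_insert (by simp; omega),
      Finset.prod_insert (by simp; omega), Finset.prod_singleton]
  rw [Finset.prod_singleton,
      show ({p, q, p*q} : Finset ℕ) = insert p (insert q ({p*q} : Finset ℕ)) from rfl,
      Finset.prod_insert (by simp; omega),
      Finset.prod_insert (by simp; omega), Finset.prod_singleton]
  rw [cyclotomic_one]
  ring

lemma my_pure_id {a b a' b' N : ℕ} (h1 : a + b = N + 1) (h2 : a + a' = N) (h3 : b + b' = N) :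
    ((X : ℤ[X]) ^ a - 1) * ((X : ℤ[X]) ^ b - 1) - X * (((X : ℤ[X]) ^ a' - 1) * ((X : ℤ[X]) ^ b' - 1))
      = (X - 1) * (X ^ N - 1) := by
  have ha1 : 1 ≤ a := by nlinarith
  have hA : (X : ℤ[X]) ^ a * X ^ b = X ^ N * X := by
    rw [← pow_add, h1, pow_succ]
  have hB : (X : ℤ[X]) * (X ^ a' * X ^ b') = X ^ N := by
    rw [← pow_add, show N = a' + b' + 1 by omega, pow_succ]; ring
  have hC : (X : ℤ[X]) * X ^ a' = X ^ b := by
    rw [show b = a' + 1 by omega, pow_succ]; ring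
  have hD : (X : ℤ[X]) * X ^ b' = X ^ a := by
    rw [show a = b' + 1 by omega, pow_succ]; ring
  linear_combination hA - hB + hC + hD

lemma my_lam_leung {p q R S R' S' : ℕ} (hp : p.Prime) (hq : q.Prime) (hpq : p < q)
    (h1 : (R + 1) * p + (S + 1) * q = p * q + 1) (hR : R + 1 + R' = q) (hS : S + 1 + S' = p) :
    cyclotomic (p * q) ℤ =
      (∑ i ∈ range (R + 1), X ^ (p * i)) * (∑ j ∈ range (S + 1), X ^ (q * j))
        - X * ((∑ i ∈ range R', X ^ (p * i)) * (∑ j ∈ range S', X ^ (q * j))) := by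
  have h0 : ((X : ℤ[X]) ^ p - 1) * ((X : ℤ[X]) ^ q - 1) ≠ 0 :=
    mul_ne_zero (by simpa using X_pow_sub_C_ne_zero hp.pos (1 : ℤ))
      (by simpa using X_pow_sub_C_ne_zero hq.pos (1 : ℤ))
  apply mul_right_cancel₀ h0
  rw [my_bin_id hp hq hpq]
  have h1' : p * (R + 1) + q * (S + 1) = p * q + 1 := by
    rw [mul_comm p, mul_comm q]; exact h1
  have h2' : p * (R + 1) + p * R' = p * q := by rw [← Nat.mul_add, hR]
  have h3' : q * (S + 1) + q * S' = q * p := by rw [← Nat.mul_add, hS]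
  have key := my_pure_id (a := p * (R+1)) (b := q * (S+1)) (a' := p * R') (b' := q * S')
    (N := p * q) h1' h2' (by rw [mul_comm p q]; exact h3')
  have g1 := geom_sum_mul ((X : ℤ[X]) ^ p) (R + 1)
  have g2 := geom_sum_mul ((X : ℤ[X]) ^ q) (S + 1)
  have g3 := geom_sum_mul ((X : ℤ[X]) ^ p) R'
  have g4 := geom_sum_mul ((X : ℤ[X]) ^ q) S'
  simp only [pow_mul] at key ⊢
  have e : ((∑ i ∈ range (R+1), ((X:ℤ[X])^p)^i) * (∑ j ∈ range (S+1), ((X:ℤ[X])^q)^j)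
      - X * ((∑ i ∈ range R', ((X:ℤ[X])^p)^i) * (∑ j ∈ range S', ((X:ℤ[X])^q)^j)))
      * (((X:ℤ[X])^p - 1) * ((X:ℤ[X])^q - 1)) =
      ((∑ i ∈ range (R+1), ((X:ℤ[X])^p)^i) * ((X:ℤ[X])^p - 1))
        * ((∑ j ∈ range (S+1), ((X:ℤ[X])^q)^j) * ((X:ℤ[X])^q - 1))
      - X * (((∑ i ∈ range R', ((X:ℤ[X])^p)^i) * ((X:ℤ[X])^p - 1))
        * ((∑ j ∈ range S', ((X:ℤ[X])^q)^j) * ((X:ℤ[X])^q - 1))) := by ring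
  rw [e, g1, g2, g3, g4]
  exact key.symm

lemma my_master {p q r : ℕ} (hp : p.Prime) (hq : q.Prime) (hr : r.Prime) (hpq : p < q)
    (hrpq : ¬ r ∣ p * q) :
    cyclotomic (p * q * r) ℤ * ((X - 1) * (X ^ (p * q) - 1)) =
      (expand ℤ r) (cyclotomic (p * q) ℤ) * ((X ^ p - 1) * (X ^ q - 1)) := by
  have hexp := cyclotomic_expand_eq_cyclotomic_mul hr hrpq ℤ
  have hbin := my_bin_id hp hq hpq
  linear_combination (-(cyclotomic (p*q*r) ℤ)) * hbin - ((X^p - 1) * (X^q - 1)) * hexp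

noncomputable def Wpoly (N k : ℕ) : ℤ[X] := ∑ m ∈ range (k + 1), C ((m / N + 1 : ℕ) : ℤ) * X ^ m

lemma Wcoeff (N k m : ℕ) :
    (Wpoly N k).coeff m = if m ≤ k then ((m / N + 1 : ℕ) : ℤ) else 0 := by
  simp only [Wpoly, finset_sum_coeff, coeff_C_mul, coeff_X_pow, mul_ite, mul_one, mul_zero,
    Finset.sum_ite_eq, Finset.sum_ite_eq', mem_range, Nat.lt_succ_iff]

lemma WinvKey {N k : ℕ} (hN : 1 < N) {n : ℕ} (hn : n ≤ k) :
    (((X - 1) * (X ^ N - 1)) * Wpoly N k).coeff n = if n = 0 then 1 else 0 := by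
  have hN0 : 0 < N := by omega
  have hexp : ((X - 1) * ((X : ℤ[X]) ^ N - 1)) * Wpoly N k =
      Wpoly N k * X ^ (N + 1) - Wpoly N k * X ^ N - Wpoly N k * X ^ 1 + Wpoly N k := by
    ring
  rw [hexp]
  simp only [coeff_add, coeff_sub, coeff_mul_X_pow', Wcoeff]
  rw [if_pos (show n - (N + 1) ≤ k by omega), if_pos (show n - N ≤ k by omega),
    if_pos (show n - 1 ≤ k by omega), if_pos hn]
  by_cases h0 : n = 0
  · subst h0
    rw [if_neg (by omega), if_neg (by omega), if_neg (by omega), if_pos rfl, Nat.zero_div]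
    norm_num
  by_cases h1 : n < N
  · rw [if_neg (by omega), if_neg (by omega), if_pos (by omega), if_neg h0,
      Nat.div_eq_of_lt (show n - 1 < N by omega), Nat.div_eq_of_lt (show n < N by omega)]
    push_cast; try ring
  by_cases h2 : n = N
  · have d1 : n - N = 0 := by omega
    have d2 : (n - 1) / N = 0 := Nat.div_eq_of_lt (by omega)
    have d3 : n / N = 1 := by rw [h2]; exact Nat.div_self hN0
    rw [if_neg (by omega), if_pos (by omega), if_pos (by omega), if_neg h0, d1, Nat.zero_div,
      d2, d3]
    push_cast; try ring
  -- n > N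
  have i1 : n / N = (n - N) / N + 1 := by
    have := Nat.add_div_right (n - N) hN0
    rw [show n - N + N = n by omega] at this
    omega
  have i2 : (n - 1) / N = (n - 1 - N) / N + 1 := by
    have := Nat.add_div_right (n - 1 - N) hN0
    rw [show n - 1 - N + N = n - 1 by omega] at this
    omega
  have i3 : n - 1 - N = n - N - 1 := by omega
  rw [i3] at i2
  have i4 : n - (N + 1) = n - N - 1 := by omega
  rw [if_pos (by omega), if_pos (by omega), if_pos (by omega), if_neg h0, i1, i2, i4]
  push_cast; ring

lemma Gcoeff {p q k : ℕ} (hp : 1 < p) (hpq : p < q) (hqp : q + p ≤ p * q) {m : ℕ} (hm : m ≤ k) :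
    (((X ^ p - 1) * (X ^ q - 1)) * Wpoly (p * q) k).coeff m =
      (if m % (p * q) < p then (1 : ℤ) else 0)
        - (if q ≤ m % (p * q) ∧ m % (p * q) < q + p then 1 else 0) := by
  have hN0 : 0 < p * q := Nat.mul_pos (by omega) (by omega)
  have hexp : (((X : ℤ[X]) ^ p - 1) * (X ^ q - 1)) * Wpoly (p * q) k =
      Wpoly (p * q) k * X ^ (p + q) - Wpoly (p * q) k * X ^ p - Wpoly (p * q) k * X ^ q
        + Wpoly (p * q) k := by ring
  rw [hexp]
  simp only [coeff_add, coeff_sub, coeff_mul_X_pow', Wcoeff]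
  rw [if_pos (show m - (p + q) ≤ k by omega), if_pos (show m - p ≤ k by omega),
    if_pos (show m - q ≤ k by omega), if_pos hm]
  obtain ⟨a, b, hb, hmab⟩ : ∃ a b, b < p * q ∧ m = p * q * a + b :=
    ⟨m / (p * q), m % (p * q), Nat.mod_lt _ hN0, (Nat.div_add_mod m (p * q)).symm⟩
  have hmod : m % (p * q) = b := by
    rw [hmab, Nat.mul_add_mod, Nat.mod_eq_of_lt hb]
  have hdivm : m / (p * q) = a := by
    rw [hmab, Nat.mul_add_div hN0, Nat.div_eq_of_lt hb, Nat.add_zero]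
  rw [hmod, hdivm]
  have div1 : ∀ c, c ≤ b → (m - c) / (p * q) = a := by
    intro c hc
    rw [hmab, show p * q * a + b - c = p * q * a + (b - c) by omega, Nat.mul_add_div hN0,
      Nat.div_eq_of_lt (by omega), Nat.add_zero]
  rcases Nat.eq_zero_or_pos a with ha0 | ha1
  · -- a = 0, m = b
    subst ha0
    have hmb : m = b := by omega
    by_cases hb1 : b < p
    · rw [if_neg (by omega), if_neg (by omega), if_neg (by omega)]
      split_ifs <;> push_cast <;> omega
    by_cases hb2 : b < q
    · rw [if_neg (by omega), if_pos (by omega), if_neg (by omega), div1 p (by omega)]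
      split_ifs <;> push_cast <;> omega
    by_cases hb3 : b < q + p
    · rw [if_neg (by omega), if_pos (by omega), if_pos (by omega),
        div1 p (by omega), div1 q (by omega)]
      split_ifs <;> push_cast <;> omega
    · rw [if_pos (by omega), if_pos (by omega), if_pos (by omega),
        div1 p (by omega), div1 q (by omega), div1 (p + q) (by omega)]
      split_ifs <;> push_cast <;> omega
  · -- a ≥ 1 : p * q ≤ m
    obtain ⟨a', rfl⟩ : ∃ a', a = a' + 1 := ⟨a - 1, by omega⟩
    have hbig : p * q ≤ m := by
      rw [hmab, Nat.mul_succ]; omega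
    have div2 : ∀ c, b < c → c ≤ p * q → (m - c) / (p * q) = a' := by
      intro c h1 h2
      rw [hmab, Nat.mul_succ, show p * q * a' + p * q + b - c = p * q * a' + (p * q + b - c)
        by omega, Nat.mul_add_div hN0, Nat.div_eq_of_lt (by omega), Nat.add_zero]
    rw [if_pos (by omega), if_pos (by omega), if_pos (by omega)]
    by_cases hb1 : b < p
    · rw [div2 p hb1 (by nlinarith), div2 q (by omega) (by nlinarith),
        div2 (p + q) (by omega) (by omega)]
      split_ifs <;> push_cast <;> omega
    by_cases hb2 : b < q
    · rw [div1 p (by omega), div2 q hb2 (by nlinarith), div2 (p + q) (by omega) (by omega)]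
      split_ifs <;> push_cast <;> omega
    by_cases hb3 : b < q + p
    · rw [div1 p (by omega), div1 q (by omega), div2 (p + q) (by omega) (by omega)]
      split_ifs <;> push_cast <;> omega
    · rw [div1 p (by omega), div1 q (by omega), div1 (p + q) (by omega)]
      split_ifs <;> push_cast <;> omega


lemma coeff_mul_delta {f g : ℤ[X]} {k : ℕ} (hg : ∀ n ≤ k, g.coeff n = if n = 0 then 1 else 0) :
    (f * g).coeff k = f.coeff k := by
  rw [coeff_mul, Finset.sum_eq_single (k, 0)]
  · rw [hg 0 (by omega)]; simp
  · rintro ⟨b1, b2⟩ hb hne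
    rw [Finset.HasAntidiagonal.mem_antidiagonal] at hb
    have hb2 : b2 ≠ 0 := by
      rintro rfl
      exact hne (by simp; omega)
    rw [hg b2 (by omega), if_neg hb2, mul_zero]
  · intro h
    exact absurd (by simp : ((k, 0) : ℕ × ℕ) ∈ Finset.HasAntidiagonal.antidiagonal k) h

noncomputable def Tval (p q r k e : ℕ) : ℤ :=
  if e * r ≤ k then
    (if (k - e * r) % (p * q) < p then (1 : ℤ) else 0)
      - (if q ≤ (k - e * r) % (p * q) ∧ (k - e * r) % (p * q) < q + p then 1 else 0)
  else 0

lemma coeff_sum_formula {p q r k R S R' S' : ℕ} (hp : p.Prime) (hq : q.Prime) (hr : r.Prime)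
    (hpq : p < q) (hrpq : ¬ r ∣ p * q)
    (h1 : (R + 1) * p + (S + 1) * q = p * q + 1) (hR : R + 1 + R' = q) (hS : S + 1 + S' = p) :
    (cyclotomic (p * q * r) ℤ).coeff k =
      (∑ i ∈ range (R + 1), ∑ j ∈ range (S + 1), Tval p q r k (p * i + q * j))
        - (∑ i ∈ range R', ∑ j ∈ range S', Tval p q r k (p * i + q * j + 1)) := by
  have hp1 : 1 < p := hp.one_lt
  have hq1 : 1 < q := hq.one_lt
  have hpq1 : 1 < p * q := by nlinarith
  have hqp : q + p ≤ p * q := by nlinarith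
  -- step 1
  have step1 : (cyclotomic (p * q * r) ℤ).coeff k =
      (cyclotomic (p * q * r) ℤ * (((X - 1) * (X ^ (p * q) - 1)) * Wpoly (p * q) k)).coeff k :=
    (coeff_mul_delta (fun n hn => WinvKey hpq1 hn)).symm
  -- step 2
  have step2 : cyclotomic (p * q * r) ℤ * (((X - 1) * (X ^ (p * q) - 1)) * Wpoly (p * q) k) =
      (expand ℤ r) (cyclotomic (p * q) ℤ) * (((X ^ p - 1) * (X ^ q - 1)) * Wpoly (p * q) k) := by
    linear_combination Wpoly (p * q) k * my_master hp hq hr hpq hrpq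
  -- step 3 : expand Lam-Leung and push into monomial double sums
  have step3 : (expand ℤ r) (cyclotomic (p * q) ℤ) =
      (∑ i ∈ range (R + 1), ∑ j ∈ range (S + 1), (X : ℤ[X]) ^ ((p * i + q * j) * r))
        - ∑ i ∈ range R', ∑ j ∈ range S', (X : ℤ[X]) ^ ((p * i + q * j + 1) * r) := by
    rw [my_lam_leung hp hq hpq h1 hR hS]
    simp only [map_sub, map_mul, map_sum, map_pow, expand_X]
    rw [Finset.sum_mul_sum, Finset.sum_mul_sum]
    simp only [Finset.mul_sum]
    congr 1
    · exact Finset.sum_congr rfl fun i _ => Finset.sum_congr rfl fun j _ => by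
        rw [← pow_mul, ← pow_mul, ← pow_add]; congr 1; ring
    · exact Finset.sum_congr rfl fun i _ => Finset.sum_congr rfl fun j _ => by
        rw [← pow_mul, ← pow_mul, ← pow_add, ← pow_add]; congr 1; ring
  set Gp : ℤ[X] := ((X ^ p - 1) * (X ^ q - 1)) * Wpoly (p * q) k with hGp
  have package : ∀ n : ℕ, (X ^ (n * r) * Gp).coeff k = Tval p q r k n := by
    intro n
    rw [coeff_X_pow_mul']
    unfold Tval
    by_cases h : n * r ≤ k
    · rw [if_pos h, if_pos h, Gcoeff hp1 hpq hqp (show k - n * r ≤ k by omega)]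
    · rw [if_neg h, if_neg h]
  calc (cyclotomic (p * q * r) ℤ).coeff k
      = (cyclotomic (p * q * r) ℤ * (((X - 1) * (X ^ (p * q) - 1)) * Wpoly (p * q) k)).coeff k :=
        step1
    _ = ((expand ℤ r) (cyclotomic (p * q) ℤ) * Gp).coeff k := by rw [step2]
    _ = (((∑ i ∈ range (R + 1), ∑ j ∈ range (S + 1), (X : ℤ[X]) ^ ((p * i + q * j) * r)) * Gp)
          - (∑ i ∈ range R', ∑ j ∈ range S', (X : ℤ[X]) ^ ((p * i + q * j + 1) * r)) * Gp).coeff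
          k := by rw [step3, sub_mul]
    _ = ((∑ i ∈ range (R + 1), ∑ j ∈ range (S + 1),
            (X : ℤ[X]) ^ ((p * i + q * j) * r) * Gp).coeff k)
          - (∑ i ∈ range R', ∑ j ∈ range S',
            (X : ℤ[X]) ^ ((p * i + q * j + 1) * r) * Gp).coeff k := by
        rw [coeff_sub]
        congr 1 <;> · rw [Finset.sum_mul]
                      congr 1
                      exact Finset.sum_congr rfl fun i _ => by rw [Finset.sum_mul]
    _ = (∑ i ∈ range (R + 1), ∑ j ∈ range (S + 1), Tval p q r k (p * i + q * j))
          - ∑ i ∈ range R', ∑ j ∈ range S', Tval p q r k (p * i + q * j + 1) := by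
        congr 1 <;>
          · rw [finset_sum_coeff]
            exact Finset.sum_congr rfl fun i _ => by
              rw [finset_sum_coeff]
              exact Finset.sum_congr rfl fun j _ => package _

lemma ar_sigma_le (P Q ρ σ : ℤ) (h : 1 + P*Q = (ρ+1)*P + (σ+1)*Q) (hρ : 0 ≤ ρ)
    (hP : 1 < P) (hQ : P < Q) : σ ≤ P - 2 := by
  by_contra hcon
  push_neg at hcon
  have h1 : (P-1)*Q ≤ σ*Q := mul_le_mul_of_nonneg_right (by omega) (by linarith)
  nlinarith [mul_nonneg hρ (show (0:ℤ) ≤ P by omega), h1]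

lemma ar_c (P L σ c : ℤ) (hc : 2*σ - L = P*c) (hσ0 : 0 ≤ σ) (hσle : σ ≤ P-2)
    (hL : 1 ≤ L) (hLP : L < P) (hP : 0 < P) : 0 ≤ c ∧ c < 2 := by
  constructor <;> nlinarith

lemma ar_rhoq (P Q L ρ : ℤ) (hρp : 2*ρ*P = (P-L-2)*Q - 2*P + 2) (hP : 2 < P) (hQ : P < Q)
    (hL : 1 ≤ L) : ρ ≤ Q - 2 := by
  nlinarith

lemma ar_rhopl (P Q L ρ : ℤ) (hρp : 2*ρ*P = (P-L-2)*Q - 2*P + 2) (h2q : (P+L)*P ≤ 2*Q)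
    (hPL : 3*L+6 ≤ P) (hL : 1 ≤ L) : P + L ≤ 2*ρ := by
  have k1 : (P-L-2)*((P+L)*P) ≤ (P-L-2)*(2*Q) :=
    mul_le_mul_of_nonneg_left h2q (by omega)
  nlinarith [k1, hρp,
    mul_nonneg (mul_nonneg (show (0:ℤ) ≤ P+L by omega) (show (0:ℤ) ≤ P by omega))
      (show (0:ℤ) ≤ P-L-6 by omega),
    mul_pos (show (0:ℤ) < P by omega) (show (0:ℤ) < P by omega)]

lemma ar_s1 (P L ρ s : ℤ) (hs2 : 2*ρ < (P+L)*s + (P+L)) (hρpl : P+L ≤ 2*ρ)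
    (hpl0 : 0 < P+L) : 1 ≤ s := by
  nlinarith

lemma ar_d1 (P Q L s : ℤ) (hsp_up : (P+L)*s*P ≤ (P-L-2)*Q - 2*P + 2)
    (hQ0 : 0 < Q) (hP : 2 < P) (hL : 1 ≤ L) (hpl0 : 0 < P + L) : 1 ≤ Q - s*P := by
  nlinarith [hsp_up, mul_pos hQ0 (show (0:ℤ) < L + 1 by omega)]

lemma ar_u0 (P L s u : ℤ) (hu3 : 2*u = s*P*(P-L-2) - 2*P + 2) (hs3 : 1 ≤ s)
    (hP : 2 < P) (hPL : 3*L+6 ≤ P) (hL : 1 ≤ L) : 0 ≤ u := by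
  have k1 : 1*(P*(P-L-2)) ≤ s*(P*(P-L-2)) :=
    mul_le_mul_of_nonneg_right hs3 (by nlinarith)
  nlinarith [k1]

lemma ar_A9 (P Q L s w αu : ℤ) (hαu : 2*αu = (P-L-4)*(Q-s*P))
    (hsp_lo : (P-L-2)*Q - 2*P + 2 < (P+L)*s*P + (P+L)*P)
    (hw : L+2 ≤ w) (h2q : (P+L)*P ≤ 2*Q) (hPL : 3*L+6 ≤ P) (hL : 1 ≤ L)
    (hQ0 : 0 < Q) (hP : 2 < P) : αu < Q*w := by
  have hd : (P+L)*(Q-s*P) < (2*L+2)*Q + 2*P - 2 + (P+L)*P := by nlinarith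
  have k1 : (P-L-4)*((P+L)*(Q-s*P)) ≤ (P-L-4)*((2*L+2)*Q + 2*P - 2 + (P+L)*P) :=
    mul_le_mul_of_nonneg_left (by linarith) (by omega)
  have k2 : Q*(L+2) ≤ Q*w := mul_le_mul_of_nonneg_left hw hQ0.le
  have k2' : (2*(P+L))*(Q*(L+2)) ≤ (2*(P+L))*(Q*w) :=
    mul_le_mul_of_nonneg_left k2 (by omega)
  have hP2Q : P*((P+L)*P) ≤ P*(2*Q) := mul_le_mul_of_nonneg_left h2q (by omega)
  have f1 : (P+L)*(2*αu) ≤ (P-L-4)*((2*L+2)*Q + 2*P - 2 + (P+L)*P) := by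
    calc (P+L)*(2*αu) = (P-L-4)*((P+L)*(Q-s*P)) := by linear_combination (P+L)*hαu
    _ ≤ _ := k1
  nlinarith [f1, k2', hP2Q,
    mul_nonneg (mul_nonneg (show (0:ℤ) ≤ L-1 by omega) (show (0:ℤ) ≤ P by omega))
      (show (0:ℤ) ≤ P by omega),
    mul_nonneg (mul_nonneg (show (0:ℤ) ≤ L by omega) (show (0:ℤ) ≤ L by omega)) hQ0.le,
    mul_nonneg (mul_nonneg (show (0:ℤ) ≤ L by omega) (show (0:ℤ) ≤ P by omega)) hQ0.le,
    mul_nonneg hQ0.le (show (0:ℤ) ≤ L by omega),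
    mul_nonneg (mul_nonneg (show (0:ℤ) ≤ L+4 by omega) (show (0:ℤ) ≤ L by omega))
      (show (0:ℤ) ≤ P by omega)]

lemma ar_A10 (P Q L s u w : ℤ) (hu3 : 2*u = s*P*(P-L-2) - 2*P + 2)
    (hsp_lo : (P-L-2)*Q - 2*P + 2 < (P+L)*s*P + (P+L)*P)
    (h2w : 2*w ≤ P-L-2) (h2q : (P+L)*P + 2 ≤ 2*Q) (hQ0 : 0 < Q) (hP : 2 < P)
    (hL : 1 ≤ L) : u + Q*w + (P-1)*(Q-s*P) ≤ P*Q - 1 := by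
  have k1 : 2*w*Q ≤ (P-L-2)*Q := mul_le_mul_of_nonneg_right h2w hQ0.le
  nlinarith [k1, hsp_lo, hu3, h2q]

lemma ar_A11 (P Q L s ρ : ℤ) (hρp : 2*ρ*P = (P-L-2)*Q - 2*P + 2)
    (hsp_up : (P+L)*s*P ≤ (P-L-2)*Q - 2*P + 2)
    (hPL : 3*L+6 ≤ P) (hL : 1 ≤ L) (hP : 2 < P) (hQ : P < Q) :
    2*ρ + s*(P-L-2) ≤ 2*Q - 2 := by
  have k1 : (P-L-2)*((P+L)*s*P) ≤ (P-L-2)*((P-L-2)*Q - 2*P + 2) :=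
    mul_le_mul_of_nonneg_left hsp_up (by omega)
  nlinarith [k1, hρp, mul_pos (show (0:ℤ) < P by omega) (show (0:ℤ) < Q by omega),
    mul_pos (show (0:ℤ) < P+L by omega) (show (0:ℤ) < P by omega),
    mul_le_mul_of_nonneg_right (show 2*(P:ℤ) ≤ P*P + 1 by nlinarith) (show (0:ℤ) ≤ Q by omega)]

lemma ar_nodvd (Q x : ℤ) (hQ : 0 < Q) (h : Q ∣ x) (h1 : 1 ≤ x) (h2 : x ≤ Q - 1) : False := by
  obtain ⟨c, rfl⟩ := h
  rcases le_or_gt c 0 with hc | hc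
  · nlinarith
  · nlinarith

set_option maxHeartbeats 1600000 in
/-- Main construction: the coefficient `a_{pqr₁}(k₁⁻)` equals `-(p-l-2)/2`. -/
theorem stmt_8 (l : ℤ) (hl : 1 ≤ l) (hlodd : Odd l)
    (p q : ℕ) (hp : p.Prime) (hq : q.Prime) (h2p : 2 < p) (hpq : p < q)
    (hql : ((p : ℤ) + l) * p / 2 ≤ (q : ℤ))
    (hqcong : (l + 2) * (q : ℤ) ≡ 2 [ZMOD (p : ℤ)])
    (ρ σ : ℤ) (hρ0 : 0 ≤ ρ) (hσ0 : 0 ≤ σ)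
    (hρσ : 1 + (p : ℤ) * q = (ρ + 1) * p + (σ + 1) * q)
    (s τ : ℤ) (hs : s = 2 * ρ / ((p : ℤ) + l)) (hτ : τ = ρ - s * ((p : ℤ) + l) / 2)
    (r₁ : ℕ) (hr₁ : r₁.Prime) (hr₁pq : (p : ℤ) * q < (r₁ : ℤ))
    (hr₁cong : (r₁ : ℤ) * ((q : ℤ) - s * p) ≡ -1 [ZMOD ((p : ℤ) * q)])
    (w : ℤ) (hw0 : 0 ≤ w) (hw1 : w ≤ (p : ℤ) - 1)
    (hwcong : w * (l + 2) ≡ 2 [ZMOD (p : ℤ)])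
    (hwlo : l + 2 ≤ w) (hwhi : w ≤ ((p : ℤ) - l - 2) / 2)
    (α u t : ℤ)
    (hα : α = (ρ + s) * p - q)
    (hu : u = -(((p : ℤ) - l - 2) * q / 2) + (((p : ℤ) - 1) * s + τ) * p)
    (ht : t = (α - u) * r₁ / ((p : ℤ) * q) + 1)
    (k : ℕ) (hk : (k : ℤ) = u * r₁ + t * ((p : ℤ) * q)) :
    (cyclotomic (p * q * r₁) ℤ).coeff k = -(((p : ℤ) - l - 2) / 2) := by
  -- parity witnesses
  obtain ⟨lm, hlm⟩ := hlodd
  have hlm' : l = 2 * lm + 1 := by omega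
  obtain ⟨pm, hpm⟩ := hp.odd_of_ne_two (by omega)
  have hpm' : (p : ℤ) = 2 * pm + 1 := by exact_mod_cast hpm
  have hp0 : (0:ℤ) < p := by exact_mod_cast hp.pos
  have hq0 : (0:ℤ) < q := by exact_mod_cast hq.pos
  have hp2 : (2:ℤ) < p := by exact_mod_cast h2p
  have hpqZ : (p:ℤ) < q := by exact_mod_cast hpq
  have hpq0 : (0:ℤ) < (p:ℤ) * q := by positivity
  -- p ≥ 3l + 6 : from hwlo, hwhi
  have hwhiZ : 2 * w ≤ (p:ℤ) - l - 2 := by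
    have he : ((p:ℤ) - l - 2) / 2 = pm - lm - 1 := by
      rw [show (p:ℤ) - l - 2 = 2 * ((pm:ℤ) - lm - 1) by omega,
        Int.mul_ediv_cancel_left _ two_ne_zero]
    rw [he] at hwhi; omega
  have hp3l : 3 * l + 6 ≤ (p:ℤ) := by omega
  -- exact form of hql
  have hqlZ : ((pm:ℤ) + lm + 1) * p ≤ q := by
    have he : ((p:ℤ) + l) * p / 2 = ((pm:ℤ) + lm + 1) * p := by
      rw [show ((p:ℤ) + l) * p = 2 * (((pm:ℤ) + lm + 1) * p) by rw [hpm', hlm']; ring,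
        Int.mul_ediv_cancel_left _ two_ne_zero]
    rw [he] at hql; exact hql
  -- σ = pm + lm + 1  (i.e. 2σ = p + l)
  have hσle : σ ≤ (p:ℤ) - 2 := ar_sigma_le _ _ _ _ hρσ hρ0 (by omega) hpqZ
  have hdvd1 : (p:ℤ) ∣ (σ + 1) * q - 1 := ⟨q - ρ - 1, by linarith [hρσ]⟩
  have hdvd2 : (p:ℤ) ∣ (l + 2) * q - 2 := by
    obtain ⟨c, hc⟩ := hqcong.dvd
    exact ⟨-c, by linear_combination -hc⟩
  have hdvdσ : (p:ℤ) ∣ 2 * σ - l := by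
    have h3 : (p:ℤ) ∣ (l + 2) * ((σ + 1) * q - 1) - (σ + 1) * ((l + 2) * q - 2) :=
      dvd_sub (hdvd1.mul_left _) (hdvd2.mul_left _)
    have he : (l + 2) * ((σ + 1) * (q:ℤ) - 1) - (σ + 1) * ((l + 2) * q - 2) = 2 * σ - l := by ring
    rwa [he] at h3
  have hσ : 2 * σ = (p:ℤ) + l := by
    obtain ⟨c, hc⟩ := hdvdσ
    obtain ⟨hc0, hc2⟩ := ar_c (p:ℤ) l σ c hc hσ0 hσle hl (by omega) hp0
    have hc01 : c = 0 ∨ c = 1 := by omega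
    rcases hc01 with rfl | rfl
    · omega
    · omega
  have hσ2 : σ = (pm:ℤ) + lm + 1 := by omega
  -- ρ identity and bounds
  have hρp : 2 * ρ * (p:ℤ) = ((p:ℤ) - l - 2) * q - 2 * p + 2 := by
    linear_combination (-2 : ℤ) * hρσ - (q : ℤ) * hσ
  have hρq : ρ ≤ (q:ℤ) - 2 := ar_rhoq _ _ _ _ hρp hp2 hpqZ hl
  -- s floor bounds
  have hpl0 : (0:ℤ) < (p:ℤ) + l := by omega
  have hs1 : ((p:ℤ) + l) * s ≤ 2 * ρ := by
    rw [hs]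
    have e1 := Int.mul_ediv_add_emod (2 * ρ) ((p:ℤ) + l)
    have e2 := Int.emod_nonneg (2 * ρ) (ne_of_gt hpl0)
    linarith
  have hs2 : 2 * ρ < ((p:ℤ) + l) * s + ((p:ℤ) + l) := by
    rw [hs]
    have e1 := Int.mul_ediv_add_emod (2 * ρ) ((p:ℤ) + l)
    have e3 := Int.emod_lt_of_pos (2 * ρ) hpl0
    linarith
  -- τ
  have hτ2 : τ = ρ - s * σ := by
    rw [hτ, show s * ((p:ℤ) + l) = 2 * (s * σ) by linear_combination (-s) * hσ,
      Int.mul_ediv_cancel_left _ two_ne_zero]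
  have h2τ : 2 * τ = 2 * ρ - ((p:ℤ) + l) * s := by linear_combination 2 * hτ2 - s * hσ
  have hτ0 : 0 ≤ τ := by linarith only [h2τ, hs1]
  have hτσ : τ < σ := by linarith only [h2τ, hs2, hσ]
  -- s ≥ 1
  have h2q : ((p:ℤ) + l) * p ≤ 2 * q := by
    rw [show ((p:ℤ) + l) * p = 2 * (((pm:ℤ) + lm + 1) * p) by rw [hpm', hlm']; ring]
    linarith only [hqlZ]
  have hρpl : (p:ℤ) + l ≤ 2 * ρ := ar_rhopl _ _ _ _ hρp h2q hp3l hl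
  have hs3 : 1 ≤ s := ar_s1 _ _ _ _ hs2 hρpl hpl0
  -- strict q bound
  have hqgt : ((pm:ℤ) + lm + 1) * p < q := by
    rcases lt_or_eq_of_le hqlZ with h | h
    · exact h
    · exfalso
      have hdq : p ∣ q := by
        have : (p:ℤ) ∣ (q:ℤ) := ⟨(pm:ℤ) + lm + 1, by linarith⟩
        exact_mod_cast this
      rcases (Nat.Prime.eq_one_or_self_of_dvd hq p hdq) with h1 | h1 <;> omega
  -- d = q - s*p ≥ 1
  have hsp_up : ((p:ℤ) + l) * s * p ≤ ((p:ℤ) - l - 2) * q - 2 * p + 2 := by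
    have h := mul_le_mul_of_nonneg_right hs1 hp0.le
    have h2 : ((p:ℤ) + l) * s * p ≤ 2 * ρ * p := by linarith only [h]
    linarith only [h2, hρp]
  have hsp_lo : ((p:ℤ) - l - 2) * q - 2 * p + 2 < ((p:ℤ) + l) * s * p + ((p:ℤ) + l) * p := by
    have h := mul_lt_mul_of_pos_right hs2 hp0
    have h2 : 2 * ρ * p < ((p:ℤ) + l) * s * p + ((p:ℤ) + l) * p := by linarith only [h]
    linarith only [h2, hρp]
  have hd1 : 1 ≤ (q:ℤ) - s * p := ar_d1 _ _ _ _ hsp_up hq0 hp2 hl hpl0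
  -- u exact
  have hu2 : u = -(((pm:ℤ) - lm - 1) * q) + (((p:ℤ) - 1) * s + τ) * p := by
    rw [hu, show ((p:ℤ) - l - 2) * q = 2 * (((pm:ℤ) - lm - 1) * q) by
        rw [hpm', hlm']; ring,
      Int.mul_ediv_cancel_left _ two_ne_zero]
  have hu3 : 2 * u = s * p * ((p:ℤ) - l - 2) - 2 * p + 2 := by
    linear_combination 2 * hu2 + 2 * (p:ℤ) * hτ2 + hρp - s * (p:ℤ) * hσ + (q:ℤ) * hpm' - (q:ℤ) * hlm'
  have hu0 : 0 ≤ u := ar_u0 _ _ _ _ hu3 hs3 hp2 hp3l hl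
  -- α - u = c0 * d
  have hαu : 2 * (α - u) = ((p:ℤ) - l - 4) * ((q:ℤ) - s * p) := by
    linear_combination 2 * hα - 2 * hu2 - 2 * (p:ℤ) * hτ2 + 2 * s * (p:ℤ) * hσ2 -
      (s * (p:ℤ) + q) * hpm' - (s * (p:ℤ) - q) * hlm'
  have h2q2 : ((p:ℤ) + l) * p + 2 ≤ 2 * q := by
    rw [show ((p:ℤ) + l) * p = 2 * (((pm:ℤ) + lm + 1) * p) by rw [hpm', hlm']; ring]
    linarith only [hqgt]
  have hA9 : α - u < (q:ℤ) * w :=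
    ar_A9 (p:ℤ) q l s w (α - u) hαu hsp_lo hwlo h2q hp3l hl hq0 hp2
  have hA10 : u + (q:ℤ) * w + ((p:ℤ) - 1) * ((q:ℤ) - s * p) ≤ (p:ℤ) * q - 1 :=
    ar_A10 _ _ _ _ _ _ hu3 hsp_lo hwhiZ h2q2 hq0 hp2 hl
  have hA11 : 2 * ρ + s * ((p:ℤ) - l - 2) ≤ 2 * q - 2 :=
    ar_A11 _ _ _ _ _ hρp hsp_up hp3l hl hp2 hpqZ
  -- p ∣ q - w
  have hPInt : Prime ((p:ℤ)) := (Nat.prime_iff_prime_int.mp hp)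
  have hpl2 : ¬ ((p:ℤ) ∣ (l + 2)) := by
    intro hdl
    have h2 : (p:ℤ) ∣ 2 := by
      have h4 := dvd_sub (hdl.mul_right (q:ℤ)) hdvd2
      rwa [show (l + 2) * (q:ℤ) - ((l + 2) * q - 2) = 2 by ring] at h4
    have := Int.le_of_dvd (by norm_num) h2
    omega
  have hdvd_qw : (p:ℤ) ∣ (q:ℤ) - w := by
    have h3 : (p:ℤ) ∣ (l + 2) * ((q:ℤ) - w) := by
      obtain ⟨c, hc⟩ := hwcong.dvd
      have h4 := dvd_add hdvd2 hwcong.dvd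
      rwa [show ((l + 2) * (q:ℤ) - 2) + (2 - w * (l + 2)) = (l + 2) * ((q:ℤ) - w) by ring] at h4
    rcases hPInt.dvd_mul.mp h3 with h | h
    · exact absurd h hpl2
    · exact h
  have hA15 : (p:ℤ) * q ∣ (q:ℤ) * ((q:ℤ) - s * p) - q * w := by
    obtain ⟨c, hc⟩ := hdvd_qw
    exact ⟨c - s, by linear_combination (q:ℤ) * hc⟩
  -- floor of k / r₁
  have hrpos : (0:ℤ) < r₁ := by exact_mod_cast hr₁.pos
  have hαu0 : 0 ≤ α - u := by
    have h5 : (0:ℤ) ≤ ((p:ℤ) - l - 4) * ((q:ℤ) - s * p) :=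
      mul_nonneg (by omega) (by linarith only [hd1])
    linarith only [h5, hαu]
  have hα0 : 0 ≤ α := by linarith only [hαu0, hu0]
  have hαpq : α ≤ (p:ℤ) * q - 1 := by
    have h5 : ((p:ℤ) - l - 4) * ((q:ℤ) - s * p) ≤ (2 * ((p:ℤ) - 1)) * ((q:ℤ) - s * p) :=
      mul_le_mul_of_nonneg_right (by omega) (by linarith only [hd1])
    have h6 : (0:ℤ) ≤ q * w := mul_nonneg hq0.le hw0
    linarith only [h5, h6, hαu, hA10, hu0]
  have htm := Int.mul_ediv_add_emod ((α - u) * (r₁:ℤ)) ((p:ℤ) * q)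
  have hem0 := Int.emod_nonneg ((α - u) * (r₁:ℤ)) (ne_of_gt hpq0)
  have hem1 := Int.emod_lt_of_pos ((α - u) * (r₁:ℤ)) hpq0
  have htq : t * ((p:ℤ) * q) = ((α - u) * (r₁:ℤ) / ((p:ℤ) * q)) * ((p:ℤ) * q)
      + (p:ℤ) * q := by rw [ht]; ring
  have hkα1 : (r₁:ℤ) * α < k := by linarith only [hk, htq, htm, hem1]
  have hkα2 : (k:ℤ) ≤ (r₁:ℤ) * α + (p:ℤ) * q := by linarith only [hk, htq, htm, hem0]
  have hke : ∀ e : ℤ, 0 ≤ e → (e * r₁ ≤ k ↔ e ≤ α) := by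
    intro e he
    constructor
    · intro h
      by_contra hcon
      push_neg at hcon
      have h7 : (α + 1) * (r₁:ℤ) ≤ e * r₁ := mul_le_mul_of_nonneg_right (by omega) hrpos.le
      linarith only [h7, hkα2, hr₁pq, h]
    · intro h
      have h7 : e * (r₁:ℤ) ≤ α * r₁ := mul_le_mul_of_nonneg_right h hrpos.le
      linarith only [h7, hkα1]
  -- window lemmas
  have hcongk : ∀ e : ℤ, ((k:ℤ) - e * r₁) ≡ (u - e) * r₁ [ZMOD ((p:ℤ) * q)] := by
    intro e
    refine Int.ModEq.symm (Int.modEq_iff_dvd.mpr ⟨t, by linear_combination hk⟩)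
  have hBd_le : ∀ B : ℤ, 0 ≤ B → B ≤ (p:ℤ) - 1 → u + B * ((q:ℤ) - s * p) ≤ (p:ℤ) * q - 1 := by
    intro B hB0 hB1
    have h5 : B * ((q:ℤ) - s * p) ≤ ((p:ℤ) - 1) * ((q:ℤ) - s * p) :=
      mul_le_mul_of_nonneg_right hB1 (by linarith only [hd1])
    have h6 : (0:ℤ) ≤ q * w := mul_nonneg hq0.le hw0
    linarith only [h5, h6, hA10]
  have hWL : ∀ e B : ℤ, 0 ≤ e → e ≤ α → 0 ≤ B → B < p →
      ((k:ℤ) - e * r₁) ≡ B [ZMOD ((p:ℤ) * q)] →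
      e = u + B * ((q:ℤ) - s * p) ∧ B ≤ (pm:ℤ) - lm - 2 := by
    intro e B he heα hB0 hBp hcong
    have h2 : B ≡ (u - e) * r₁ [ZMOD ((p:ℤ) * q)] := hcong.symm.trans (hcongk e)
    have h3 : B * ((q:ℤ) - s * p) ≡ (u - e) * ((r₁:ℤ) * ((q:ℤ) - s * p))
        [ZMOD ((p:ℤ) * q)] := by
      have := h2.mul_right ((q:ℤ) - s * p)
      rwa [mul_assoc] at this
    have h4 : B * ((q:ℤ) - s * p) ≡ (u - e) * (-1) [ZMOD ((p:ℤ) * q)] :=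
      h3.trans (Int.ModEq.mul_left _ hr₁cong)
    have h5 : (p:ℤ) * q ∣ (u + B * ((q:ℤ) - s * p)) - e := by
      have := h4.dvd
      have h6 : (u - e) * (-1) - B * ((q:ℤ) - s * p) =
          -((u + B * ((q:ℤ) - s * p)) - e) := by ring
      rw [h6] at this
      exact (dvd_neg.mp this)
    have heq : e = u + B * ((q:ℤ) - s * p) := by
      have habs : |(u + B * ((q:ℤ) - s * p)) - e| < (p:ℤ) * q := by
        rw [abs_lt]
        have h7 : 0 ≤ B * ((q:ℤ) - s * p) := mul_nonneg hB0 (by linarith only [hd1])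
        constructor
        · linarith only [h7, hu0, heα, hαpq]
        · linarith only [hBd_le B hB0 (by omega), he]
      have := Int.eq_zero_of_abs_lt_dvd h5 habs
      linarith only [this]
    refine ⟨heq, ?_⟩
    have hαu2 : α - u = ((pm:ℤ) - lm - 2) * ((q:ℤ) - s * p) := by
      have h8 : 2 * (α - u) = 2 * (((pm:ℤ) - lm - 2) * ((q:ℤ) - s * p)) := by
        rw [hαu]; rw [show ((p:ℤ) - l - 4) = 2 * ((pm:ℤ) - lm - 2) by omega]; ring
      linarith only [h8]
    by_contra hcon
    push_neg at hcon
    have h9 : ((pm:ℤ) - lm - 1) * ((q:ℤ) - s * p) ≤ B * ((q:ℤ) - s * p) :=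
      mul_le_mul_of_nonneg_right (by omega) (by linarith only [hd1])
    have h10 : (0:ℤ) ≤ ((q:ℤ) - s * p) := by linarith only [hd1]
    have h11 : ((pm:ℤ) - lm - 2) * ((q:ℤ) - s * p) + ((q:ℤ) - s*p) =
        ((pm:ℤ) - lm - 1) * ((q:ℤ) - s * p) := by ring
    linarith only [h9, h11, hαu2, heα, heq, hd1]
  have hαu2 : α - u = ((pm:ℤ) - lm - 2) * ((q:ℤ) - s * p) := by
    have h8 : 2 * (α - u) = 2 * (((pm:ℤ) - lm - 2) * ((q:ℤ) - s * p)) := by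
      rw [hαu, show ((p:ℤ) - l - 4) = 2 * ((pm:ℤ) - lm - 2) by omega]; ring
    linarith only [h8]
  have hWL2 : ∀ e B : ℤ, 0 ≤ e → e ≤ α → 0 ≤ B → B < p →
      ((k:ℤ) - e * r₁) ≡ (q:ℤ) + B [ZMOD ((p:ℤ) * q)] → False := by
    intro e B he heα hB0 hBp hcong
    have h2 : ((q:ℤ) + B) ≡ (u - e) * r₁ [ZMOD ((p:ℤ) * q)] := hcong.symm.trans (hcongk e)
    have h3 : ((q:ℤ) + B) * ((q:ℤ) - s * p) ≡ (u - e) * ((r₁:ℤ) * ((q:ℤ) - s * p))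
        [ZMOD ((p:ℤ) * q)] := by
      have := h2.mul_right ((q:ℤ) - s * p)
      rwa [mul_assoc] at this
    have h4 := (h3.trans (Int.ModEq.mul_left _ hr₁cong)).dvd
    have h5 : (p:ℤ) * q ∣ e - (u + q * w + B * ((q:ℤ) - s * p)) := by
      have h6 := dvd_add h4 (dvd_mul_of_dvd_right hA15 1)
      have h7 : (u - e) * (-1) - ((q:ℤ) + B) * ((q:ℤ) - s * p) +
          1 * ((q:ℤ) * ((q:ℤ) - s * p) - q * w) =
          e - (u + q * w + B * ((q:ℤ) - s * p)) := by ring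
      rwa [h7] at h6
    have hBb : B * ((q:ℤ) - s * p) ≤ ((p:ℤ) - 1) * ((q:ℤ) - s * p) :=
      mul_le_mul_of_nonneg_right (by omega) (by linarith only [hd1])
    have hB7 : 0 ≤ B * ((q:ℤ) - s * p) := mul_nonneg hB0 (by linarith only [hd1])
    have hqw0 : (0:ℤ) ≤ q * w := mul_nonneg hq0.le hw0
    have heqV := Int.eq_zero_of_abs_lt_dvd h5 (by
      rw [abs_lt]
      constructor
      · linarith only [he, hBb, hA10]
      · linarith only [heα, hαpq, hB7, hqw0, hu0])
    -- e = u + qw + B d  but e ≤ α < u + qw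
    linarith only [heqV, heα, hA9, hB7]
  -- the canonical representation identity
  have hIDX : ∀ B : ℤ, u + B * ((q:ℤ) - s * p) + (p:ℤ) * q =
      (((p:ℤ) - 1) * s + τ - B * s) * p + (σ + 1 + B) * q := by
    intro B
    linear_combination hu2 - (q:ℤ) * hσ2 + (q:ℤ) * hpm'
  have hX0up : ((p:ℤ) - 1) * s + τ ≤ q - 1 := by
    have h8 : 2 * (((p:ℤ) - 1) * s + τ) = 2 * ρ + s * ((p:ℤ) - l - 2) := by
      linear_combination 2 * hτ2 - s * hσ
    linarith only [h8, hA11]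
  have hX0lo : ∀ B : ℤ, 0 ≤ B → B ≤ (pm:ℤ) - lm - 2 →
      ρ + s ≤ ((p:ℤ) - 1) * s + τ - B * s := by
    intro B h0 h1
    have h2 : B * s ≤ ((pm:ℤ) - lm - 2) * s :=
      mul_le_mul_of_nonneg_right h1 (by linarith only [hs3])
    have h3 : ((p:ℤ) - 1) * s + τ - ((pm:ℤ) - lm - 2) * s = ρ + s := by
      linear_combination hτ2 - s * hσ2 + s * hpm'
    linarith only [h2, h3]
  -- natural number versions
  obtain ⟨R, hRc⟩ : ∃ R : ℕ, (R:ℤ) = ρ := ⟨ρ.toNat, Int.toNat_of_nonneg hρ0⟩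
  obtain ⟨S, hSc⟩ : ∃ S : ℕ, (S:ℤ) = σ := ⟨σ.toNat, Int.toNat_of_nonneg hσ0⟩
  have hRq : R + 1 ≤ q - 1 := by
    have : (R:ℤ) ≤ (q:ℤ) - 2 := by rw [hRc]; exact hρq
    omega
  have hSp : S + 1 ≤ p - 1 := by
    have : (S:ℤ) ≤ (p:ℤ) - 2 := by rw [hSc]; exact hσle
    omega
  obtain ⟨R', hR'⟩ : ∃ R' : ℕ, R + 1 + R' = q := ⟨q - (R+1), by omega⟩
  obtain ⟨S', hS'⟩ : ∃ S' : ℕ, S + 1 + S' = p := ⟨p - (S+1), by omega⟩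
  have hR'c : (R':ℤ) = (q:ℤ) - 1 - ρ := by
    have : ((R:ℤ) + 1 + R') = q := by exact_mod_cast hR'
    omega
  have hS'c : (S':ℤ) = (p:ℤ) - 1 - σ := by
    have : ((S:ℤ) + 1 + S') = p := by exact_mod_cast hS'
    omega
  have hS'v : (S':ℤ) = (pm:ℤ) - lm - 1 := by omega
  have h1 : (R + 1) * p + (S + 1) * q = p * q + 1 := by
    have h : ((R:ℤ) + 1) * p + ((S:ℤ) + 1) * q = (p:ℤ) * q + 1 := by
      rw [hRc, hSc]; linarith only [hρσ]
    exact_mod_cast h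
  have hrpq' : ¬ r₁ ∣ p * q := by
    intro hdvd
    have h2 : r₁ ≤ p * q := Nat.le_of_dvd (Nat.mul_pos hp.pos hq.pos) hdvd
    have h3 : ((p:ℤ) * q) < r₁ := hr₁pq
    have h4 : ((r₁:ℤ)) ≤ (p:ℤ) * q := by exact_mod_cast h2
    linarith only [h3, h4]
  -- mod congruence for m = k - e r₁
  have hmodcong : ∀ e : ℕ, e * r₁ ≤ k →
      (((k - e * r₁) % (p * q) : ℕ) : ℤ) ≡ (k:ℤ) - e * r₁ [ZMOD ((p:ℤ) * q)] := by
    intro e hek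
    have hmcast : ((k - e * r₁ : ℕ) : ℤ) = (k:ℤ) - e * r₁ := by
      rw [Nat.cast_sub hek]; push_cast; ring
    have h1' : (((k - e * r₁) % (p * q) : ℕ) : ℤ) = ((k - e * r₁ : ℕ) : ℤ) % ((p:ℤ) * q) := by
      rw [Int.natCast_mod]; push_cast; ring_nf
    rw [h1', hmcast]
    exact Int.emod_emod_of_dvd _ dvd_rfl
  have hmodlt : ∀ e : ℕ, (((k - e * r₁) % (p * q) : ℕ) : ℤ) < (p:ℤ) * q := by
    intro e
    have := Nat.mod_lt (k - e * r₁) (Nat.mul_pos hp.pos hq.pos)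
    exact_mod_cast this
  -- window dichotomy
  have hwin : ∀ e : ℕ, (e:ℤ) ≤ α → e * r₁ ≤ k →
      ((k - e * r₁) % (p * q) < p →
        ((e:ℤ) = u + (((k - e * r₁) % (p * q) : ℕ) : ℤ) * ((q:ℤ) - s * p) ∧
          (((k - e * r₁) % (p * q) : ℕ) : ℤ) ≤ (pm:ℤ) - lm - 2)) ∧
      (q ≤ (k - e * r₁) % (p * q) → (k - e * r₁) % (p * q) < q + p → False) := by
    intro e heα hek
    have hc0 := hmodcong e hek
    constructor
    · intro hB
      have hBp : (((k - e * r₁) % (p * q) : ℕ) : ℤ) < p := by exact_mod_cast hB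
      exact hWL e _ (by positivity) heα (by positivity) hBp hc0.symm
    · intro h1' h2'
      have hq1 : ((q:ℤ)) ≤ (((k - e * r₁) % (p * q) : ℕ) : ℤ) := by exact_mod_cast h1'
      have hq2 : (((k - e * r₁) % (p * q) : ℕ) : ℤ) < (q:ℤ) + p := by exact_mod_cast h2'
      apply hWL2 e ((((k - e * r₁) % (p * q) : ℕ) : ℤ) - q) (by positivity) heα
        (by linarith only [hq1]) (by linarith only [hq2])
      have h3' : (q:ℤ) + ((((k - e * r₁) % (p * q) : ℕ) : ℤ) - q) =
          (((k - e * r₁) % (p * q) : ℕ) : ℤ) := by ring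
      rw [h3']
      exact hc0.symm
  -- Sum A vanishes
  have hSumA : (∑ i ∈ range (R + 1), ∑ j ∈ range (S + 1),
      Tval p q r₁ k (p * i + q * j)) = 0 := by
    apply Finset.sum_eq_zero
    intro i hi
    apply Finset.sum_eq_zero
    intro j hj
    rw [mem_range] at hi hj
    by_cases hek : (p * i + q * j) * r₁ ≤ k
    swap
    · rw [Tval, if_neg hek]
    have he0 : (0:ℤ) ≤ ((p * i + q * j : ℕ) : ℤ) := by positivity
    have heα : ((p * i + q * j : ℕ) : ℤ) ≤ α := (hke _ he0).mp (by exact_mod_cast hek)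
    rw [Tval, if_pos hek]
    by_cases hB : (k - (p * i + q * j) * r₁) % (p * q) < p
    · exfalso
      obtain ⟨heq, hBle⟩ := (hwin _ heα hek).1 hB
      set B : ℤ := (((k - (p * i + q * j) * r₁) % (p * q) : ℕ) : ℤ) with hBdef
      have hB0' : (0:ℤ) ≤ B := by positivity
      have he2 : ((p * i + q * j : ℕ) : ℤ) = (p:ℤ) * i + q * j := by push_cast; ring
      have hkey : ((p:ℤ)) * ((((p:ℤ) - 1) * s + τ - B * s) - i) =
          (q:ℤ) * ((j:ℤ) + p - (σ + 1 + B)) := by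
        linear_combination (-1 : ℤ) * hIDX B - heq + he2
      have hQInt : Prime ((q:ℤ)) := Nat.prime_iff_prime_int.mp hq
      have hdvdq : (q:ℤ) ∣ ((((p:ℤ) - 1) * s + τ - B * s) - i) := by
        have h5 : (q:ℤ) ∣ (p:ℤ) * ((((p:ℤ) - 1) * s + τ - B * s) - i) := ⟨_, hkey⟩
        rcases hQInt.dvd_mul.mp h5 with h | h
        · exfalso
          have h6 := Int.le_of_dvd hp0 h
          omega
        · exact h
      have hlo := hX0lo B hB0' hBle
      have hBs : (0:ℤ) ≤ B * s := mul_nonneg hB0' (by linarith only [hs3])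
      have hiρ : (i:ℤ) ≤ ρ := by
        have : (i:ℤ) ≤ (R:ℤ) := by exact_mod_cast (by omega : i ≤ R)
        omega
      exact ar_nodvd (q:ℤ) _ hq0 hdvdq (by linarith only [hlo, hiρ, hs3])
        (by linarith only [hX0up, hBs, hiρ, hρ0, Int.natCast_nonneg i])
    · rw [if_neg hB]
      by_cases hB2 : q ≤ (k - (p * i + q * j) * r₁) % (p * q) ∧
          (k - (p * i + q * j) * r₁) % (p * q) < q + p
      · exact ((hwin _ heα hek).2 hB2.1 hB2.2).elim
      · rw [if_neg hB2]; ring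
  -- Sum B equals S'
  have hSumB : (∑ i ∈ range R', ∑ j ∈ range S',
      Tval p q r₁ k (p * i + q * j + 1)) = (S' : ℤ) := by
    rw [Finset.sum_comm]
    have hinner : ∀ j ∈ range S',
        (∑ i ∈ range R', Tval p q r₁ k (p * i + q * j + 1)) = 1 := by
      intro j hj
      rw [mem_range] at hj
      have hjle : (j:ℤ) ≤ (pm:ℤ) - lm - 2 := by
        have : (j:ℤ) < (S':ℤ) := by exact_mod_cast hj
        omega
      obtain ⟨C, hCeq⟩ : ∃ C : ℕ, (C:ℤ) = ((p:ℤ) - 1) * s + τ - j * s - ρ - 1 :=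
        ⟨(((p:ℤ) - 1) * s + τ - j * s - ρ - 1).toNat,
          Int.toNat_of_nonneg (by linarith only [hX0lo (j:ℤ) (by positivity) hjle, hs3])⟩
      have hjs : (0:ℤ) ≤ (j:ℤ) * s := mul_nonneg (by positivity) (by linarith only [hs3])
      have hCR : C < R' := by
        have h5 : (C:ℤ) < (R':ℤ) := by
          rw [hCeq, hR'c]
          linarith only [hX0up, hjs, hs3]
        exact_mod_cast h5
      have hterm : ∀ i ∈ range R', Tval p q r₁ k (p * i + q * j + 1) =
          if i = C then 1 else 0 := by
        intro i hi
        rw [mem_range] at hi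
        by_cases hiC : i = C
        · subst hiC
          rw [if_pos rfl]
          have he2 : ((p * i + q * j + 1 : ℕ) : ℤ) = (p:ℤ) * i + q * j + 1 := by
            push_cast; ring
          have heu : ((p * i + q * j + 1 : ℕ) : ℤ) = u + (j:ℤ) * ((q:ℤ) - s * p) := by
            linear_combination he2 + (p:ℤ) * hCeq - hIDX (j:ℤ) + hρσ
          have heα : ((p * i + q * j + 1 : ℕ) : ℤ) ≤ α := by
            have h5 : (j:ℤ) * ((q:ℤ) - s * p) ≤ ((pm:ℤ) - lm - 2) * ((q:ℤ) - s * p) :=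
              mul_le_mul_of_nonneg_right hjle (by linarith only [hd1])
            linarith only [heu, hαu2, h5]
          have hek : (p * i + q * j + 1) * r₁ ≤ k := by
            have h5 : ((p * i + q * j + 1 : ℕ) : ℤ) * r₁ ≤ (k:ℤ) :=
              (hke _ (by positivity)).mpr heα
            exact_mod_cast h5
          rw [Tval, if_pos hek]
          have hjp : j < p := by
            have : (j:ℤ) < (p:ℤ) := by omega
            exact_mod_cast this
          have hjmod : (k - (p * i + q * j + 1) * r₁) % (p * q) = j := by
            have hcong1 : ((k:ℤ) - (p * i + q * j + 1 : ℕ) * r₁) ≡ (j:ℤ)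
                [ZMOD ((p:ℤ) * q)] := by
              refine (hcongk (((p * i + q * j + 1 : ℕ) : ℤ))).trans ?_
              refine Int.modEq_iff_dvd.mpr ?_
              obtain ⟨c, hc⟩ := hr₁cong.dvd
              exact ⟨(-(j:ℤ)) * c, by linear_combination (r₁:ℤ) * heu - (j:ℤ) * hc⟩
            have h8 := (hmodcong _ hek).trans hcong1
            have h9 : (((k - (p * i + q * j + 1) * r₁) % (p * q) : ℕ) : ℤ) = (j:ℤ) := by
              have h10 := h8.dvd
              have h11 := Int.eq_zero_of_abs_lt_dvd h10 (by
                rw [abs_lt]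
                have hj2 : (j:ℤ) < (p:ℤ) * q := by
                  have hpj : (j:ℤ) < (p:ℤ) := by exact_mod_cast hjp
                  have hppq : (p:ℤ) * 1 ≤ (p:ℤ) * q :=
                    mul_le_mul_of_nonneg_left (by omega) hp0.le
                  linarith only [hpj, hppq]
                have h12 : (0:ℤ) ≤ (((k - (p * i + q * j + 1) * r₁) % (p * q) : ℕ) : ℤ) := by
                  positivity
                have hj3 : (0:ℤ) ≤ (j:ℤ) := by positivity
                have hml := hmodlt (p * i + q * j + 1)
                constructor
                · linarith only [hml, hj3]
                · linarith only [hj2, h12])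
              linarith only [h11]
            exact_mod_cast h9
          rw [hjmod, if_pos hjp, if_neg (by omega)]
          norm_num
        · rw [if_neg hiC]
          by_cases hek : (p * i + q * j + 1) * r₁ ≤ k
          swap
          · rw [Tval, if_neg hek]
          have heα : ((p * i + q * j + 1 : ℕ) : ℤ) ≤ α :=
            (hke _ (by positivity)).mp (by exact_mod_cast hek)
          rw [Tval, if_pos hek]
          by_cases hB : (k - (p * i + q * j + 1) * r₁) % (p * q) < p
          · exfalso
            obtain ⟨heq, hBle⟩ := (hwin _ heα hek).1 hB
            set B : ℤ := (((k - (p * i + q * j + 1) * r₁) % (p * q) : ℕ) : ℤ) with hBdef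
            have hB0' : (0:ℤ) ≤ B := by positivity
            have he2 : ((p * i + q * j + 1 : ℕ) : ℤ) = (p:ℤ) * i + q * j + 1 := by
              push_cast; ring
            have hkey : ((p:ℤ)) * ((ρ + 1 + i) - (((p:ℤ) - 1) * s + τ - B * s)) =
                (q:ℤ) * ((σ + 1 + B) - (σ + 1 + j)) := by
              linear_combination hIDX B + heq - he2 - hρσ
            have hQInt : Prime ((q:ℤ)) := Nat.prime_iff_prime_int.mp hq
            have hdq : (q:ℤ) ∣ ((ρ + 1 + i) - (((p:ℤ) - 1) * s + τ - B * s)) := by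
              have h5 : (q:ℤ) ∣ (p:ℤ) * ((ρ + 1 + i) - (((p:ℤ) - 1) * s + τ - B * s)) :=
                ⟨_, hkey⟩
              rcases hQInt.dvd_mul.mp h5 with h | h
              · exfalso
                have h6 := Int.le_of_dvd hp0 h
                omega
              · exact h
            have hBs : (0:ℤ) ≤ B * s := mul_nonneg hB0' (by linarith only [hs3])
            have hlo := hX0lo B hB0' hBle
            have hiR' : (i:ℤ) ≤ (q:ℤ) - ρ - 2 := by
              have : (i:ℤ) < (R':ℤ) := by exact_mod_cast hi
              omega
            have hx : (ρ + 1 + (i:ℤ)) = ((p:ℤ) - 1) * s + τ - B * s := by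
              have h0' := Int.eq_zero_of_abs_lt_dvd hdq (by
                rw [abs_lt]
                constructor
                · have hi0 : (0:ℤ) ≤ (i:ℤ) := by positivity
                  linarith only [hX0up, hBs, hρ0, hi0, hq0]
                · linarith only [hiR', hlo, hs3, hρ0])
              linarith only [h0']
            have hjB : (j:ℤ) = B := by
              have h5 : (q:ℤ) * ((σ + 1 + B) - (σ + 1 + j)) = 0 := by
                rw [← hkey, hx]; ring
              rcases mul_eq_zero.mp h5 with h | h
              · exfalso; linarith only [h, hq0]
              · linarith only [h]
            apply hiC
            have hsj : (j:ℤ) * s = B * s := by rw [hjB]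
            have : (i:ℤ) = (C:ℤ) := by linarith only [hx, hCeq, hsj]
            exact_mod_cast this
          · rw [if_neg hB]
            by_cases hB2 : q ≤ (k - (p * i + q * j + 1) * r₁) % (p * q) ∧
                (k - (p * i + q * j + 1) * r₁) % (p * q) < q + p
            · exact ((hwin _ heα hek).2 hB2.1 hB2.2).elim
            · rw [if_neg hB2]; ring
      rw [Finset.sum_congr rfl hterm, Finset.sum_ite_eq' (range R') C (fun _ => (1:ℤ)),
        if_pos (mem_range.mpr hCR)]
    rw [Finset.sum_congr rfl hinner, Finset.sum_const, card_range, nsmul_eq_mul, mul_one]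
  -- assembling
  rw [coeff_sum_formula hp hq hr₁ hpq hrpq' h1 hR' hS', hSumA, hSumB]
  have hfin : ((p:ℤ) - l - 2) / 2 = (S' : ℤ) := by
    rw [show ((p:ℤ) - l - 2) = 2 * ((pm:ℤ) - lm - 1) by omega,
      Int.mul_ediv_cancel_left _ two_ne_zero]
    omega
  rw [hfin]
  ring
end

section
/- Let p be a prime and suppose β₁, β₂ ∈ B_R(p) satisfy β₁ = p - β₂*. Then β₁ and β₂ both lie in B₁(p) and β₁ = β₂. -/
/-- If `β₁, β₂ ∈ B_R(p)` and `β₁ = p - β₂*`, then `β₁, β₂ ∈ B₁(p)` and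
`β₁ = β₂`. -/
theorem stmt_13 (p : ℕ) (hp : p.Prime) (β₁ β₂ βs₁ βs₂ : ℕ)
    (hβs₁1 : 1 ≤ βs₁) (hβs₁2 : βs₁ ≤ p - 1) (hβs₁inv : β₁ * βs₁ ≡ 1 [MOD p])
    (hβs₂1 : 1 ≤ βs₂) (hβs₂2 : βs₂ ≤ p - 1) (hβs₂inv : β₂ * βs₂ ≡ 1 [MOD p])
    (hβ₁R : (1 ≤ β₁ ∧ β₁ ≤ (p - 3) / 2 ∧ p ≤ β₁ + βs₁ ∧ βs₁ ≤ 2 * β₁) ∨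
            (1 ≤ β₁ ∧ β₁ ≤ (p - 3) / 2 ∧ p ≤ 2 * β₁ + βs₁ ∧ βs₁ ≤ β₁))
    (hβ₂R : (1 ≤ β₂ ∧ β₂ ≤ (p - 3) / 2 ∧ p ≤ β₂ + βs₂ ∧ βs₂ ≤ 2 * β₂) ∨
            (1 ≤ β₂ ∧ β₂ ≤ (p - 3) / 2 ∧ p ≤ 2 * β₂ + βs₂ ∧ βs₂ ≤ β₂))
    (heq : β₁ = p - βs₂) :
    (1 ≤ β₁ ∧ β₁ ≤ (p - 3) / 2 ∧ p ≤ β₁ + βs₁ ∧ βs₁ ≤ 2 * β₁) ∧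
    (1 ≤ β₂ ∧ β₂ ≤ (p - 3) / 2 ∧ p ≤ β₂ + βs₂ ∧ βs₂ ≤ 2 * β₂) ∧
    β₁ = β₂ := by
  haveI : Fact p.Prime := ⟨hp⟩
  have hβ₁1 : 1 ≤ β₁ := by rcases hβ₁R with h | h <;> exact h.1
  have hβ₁le : β₁ ≤ (p - 3) / 2 := by rcases hβ₁R with h | h <;> exact h.2.1
  have hβ₂1 : 1 ≤ β₂ := by rcases hβ₂R with h | h <;> exact h.1
  have hβ₂le : β₂ ≤ (p - 3) / 2 := by rcases hβ₂R with h | h <;> exact h.2.1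
  have hp5 : 5 ≤ p := by omega
  -- β₁ + βs₂ = p
  have hsum : β₁ + βs₂ = p := by omega
  -- β₂ ∈ B₁
  have hB2 : p ≤ β₂ + βs₂ ∧ βs₂ ≤ 2 * β₂ := by
    rcases hβ₂R with h | h
    · exact ⟨h.2.2.1, h.2.2.2⟩
    · exfalso; omega
  -- pass to ZMod p
  have h1 : (β₁ : ZMod p) * βs₁ = 1 := by
    have := (ZMod.natCast_eq_natCast_iff _ _ _).mpr hβs₁inv
    push_cast at this; exact this
  have h2 : (β₂ : ZMod p) * βs₂ = 1 := by
    have := (ZMod.natCast_eq_natCast_iff _ _ _).mpr hβs₂inv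
    push_cast at this; exact this
  have hcast : (β₁ : ZMod p) = -(βs₂ : ZMod p) := by
    have h0 : ((β₁ + βs₂ : ℕ) : ZMod p) = 0 := by
      rw [hsum]; exact ZMod.natCast_self p
    push_cast at h0
    linear_combination h0
  have key : (βs₂ : ZMod p) * ((βs₁ : ZMod p) + (β₂ : ZMod p)) = 0 := by
    linear_combination h2 + (βs₁ : ZMod p) * hcast - h1
  have hne : (βs₂ : ZMod p) ≠ 0 := by
    intro h
    rw [h, mul_zero] at h2
    exact zero_ne_one h2
  have hz : ((βs₁ + β₂ : ℕ) : ZMod p) = 0 := by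
    push_cast
    rcases mul_eq_zero.mp key with h | h
    · exact absurd h hne
    · exact h
  have hdvd : p ∣ βs₁ + β₂ := (ZMod.natCast_eq_zero_iff _ _).mp hz
  have hsum1 : βs₁ + β₂ = p := by
    obtain ⟨k, hk⟩ := hdvd
    have hub : βs₁ + β₂ < 2 * p := by omega
    have hk2 : k < 2 := by
      by_contra h
      push_neg at h
      have : 2 * p ≤ p * k := by
        calc 2 * p = p * 2 := by ring
        _ ≤ p * k := Nat.mul_le_mul_left p h
      omega
    interval_cases k <;> omega
  -- β₁ ∈ B₁
  have hB1 : p ≤ β₁ + βs₁ ∧ βs₁ ≤ 2 * β₁ := by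
    rcases hβ₁R with h | h
    · exact ⟨h.2.2.1, h.2.2.2⟩
    · exfalso; omega
  refine ⟨⟨hβ₁1, hβ₁le, hB1.1, hB1.2⟩, ⟨hβ₂1, hβ₂le, hB2.1, hB2.2⟩, ?_⟩
  omega
end

section
/- Let l ≥ 1 be an odd integer and let 2 < p < q be primes with l ≤ p - 4, q ≥ (p+l)p/2 and (l+2)q ≡ 2 (mod p). Let ρ and σ be the non-negative integers with 1 + pq = (ρ+1)p + (σ+1)q. Then σ = (p+l)/2, 2ρp = pq - (l+2)q - 2p + 2, and 2ρ < q. -/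
/-- Under the hypotheses of the main construction (with `l ≤ p - 4`),
`σ = (p+l)/2`, `2ρp = pq - (l+2)q - 2p + 2` and `2ρ < q`. -/
theorem stmt_16 (l : ℤ) (hl : 1 ≤ l) (hlodd : Odd l)
    (p q : ℕ) (hp : p.Prime) (hq : q.Prime) (h2p : 2 < p) (hpq : p < q)
    (hlp : l ≤ (p : ℤ) - 4)
    (hql : ((p : ℤ) + l) * p / 2 ≤ (q : ℤ))
    (hqcong : (l + 2) * (q : ℤ) ≡ 2 [ZMOD (p : ℤ)])
    (ρ σ : ℤ) (hρ0 : 0 ≤ ρ) (hσ0 : 0 ≤ σ)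
    (hρσ : 1 + (p : ℤ) * q = (ρ + 1) * p + (σ + 1) * q) :
    σ = ((p : ℤ) + l) / 2 ∧
    2 * ρ * p = (p : ℤ) * q - (l + 2) * q - 2 * p + 2 ∧
    2 * ρ < (q : ℤ) := by
  have hP : (2:ℤ) < p := by exact_mod_cast h2p
  have hQ : (p:ℤ) < q := by exact_mod_cast hpq
  have hdvd1 : (p:ℤ) ∣ (σ + 1) * q - 1 := ⟨q - (ρ + 1), by linarith [hρσ]; ⟩
  have hdvd2 : (p:ℤ) ∣ 2 - (l + 2) * q := hqcong.dvd
  have hdvd3 : (p:ℤ) ∣ (2 * σ - l) * q := by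
    have h : (2 * σ - l) * q = 2 * ((σ + 1) * q - 1) + (2 - (l + 2) * q) := by ring
    rw [h]
    exact dvd_add (Dvd.dvd.mul_left hdvd1 2) hdvd2
  have hpZ : Prime ((p:ℤ)) := Nat.prime_iff_prime_int.mp hp
  have hnpq : ¬ ((p:ℤ) ∣ (q:ℤ)) := by
    intro h
    rw [Int.natCast_dvd_natCast] at h
    exact hpq.ne ((Nat.prime_dvd_prime_iff_eq hp hq).mp h)
  have hdvdσ : (p:ℤ) ∣ 2 * σ - l := by
    rcases hpZ.dvd_mul.mp hdvd3 with h | h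
    · exact h
    · exact absurd h hnpq
  -- bound σ ≤ p - 2
  have hσub : σ + 1 < (p:ℤ) := by
    by_contra hcon
    push_neg at hcon
    have h1 : (σ + 1) * q ≥ (p:ℤ) * q := by nlinarith
    nlinarith
  have h2σ : 2 * σ = (p:ℤ) + l := by
    obtain ⟨k, hk⟩ := hdvdσ
    obtain ⟨m, hm⟩ := hlodd
    have hk2 : k < 2 := by nlinarith
    have hkm : (-1:ℤ) < k := by nlinarith
    rcases (by omega : k = 0 ∨ k = 1) with rfl | rfl
    · simp only [mul_zero] at hk; omega
    · linarith
  refine ⟨by omega, ?_, ?_⟩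
  · linear_combination -2 * hρσ - (q:ℤ) * h2σ
  · nlinarith
end

section
/- Let l ≥ 1 be an odd integer and let primes 2 < p < q satisfy p ≥ 3l + 8, q ≥ (p+l)p/2 and (l+2)q ≡ 2 (mod p). Let ρ, σ be the non-negative integers with 1 + pq = (ρ+1)p + (σ+1)q, put s = ⌊2ρ/(p+l)⌋ and τ = ρ - s(p+l)/2. Then s ≥ l + 2, q ≥ sp + 1, q ≥ (τ+1)p, and q - (p-l-2)s/2 > ρ. -/
/-- Under the hypotheses of the main construction (with `p ≥ 3l + 8`),
`s ≥ l + 2`, `q ≥ sp + 1`, `q ≥ (τ+1)p` and `q - (p-l-2)s/2 > ρ`. -/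
theorem stmt_17 (l : ℤ) (hl : 1 ≤ l) (hlodd : Odd l)
    (p q : ℕ) (hp : p.Prime) (hq : q.Prime) (h2p : 2 < p) (hpq : p < q)
    (hpl : 3 * l + 8 ≤ (p : ℤ))
    (hql : ((p : ℤ) + l) * p / 2 ≤ (q : ℤ))
    (hqcong : (l + 2) * (q : ℤ) ≡ 2 [ZMOD (p : ℤ)])
    (ρ σ : ℤ) (hρ0 : 0 ≤ ρ) (hσ0 : 0 ≤ σ)
    (hρσ : 1 + (p : ℤ) * q = (ρ + 1) * p + (σ + 1) * q)
    (s τ : ℤ) (hs : s = 2 * ρ / ((p : ℤ) + l)) (hτ : τ = ρ - s * ((p : ℤ) + l) / 2) :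
    l + 2 ≤ s ∧
    s * p + 1 ≤ (q : ℤ) ∧
    (τ + 1) * p ≤ (q : ℤ) ∧
    ρ < (q : ℤ) - ((p : ℤ) - l - 2) * s / 2 := by
  obtain ⟨a, ha⟩ := hp.odd_of_ne_two (by omega)
  obtain ⟨b, hb⟩ := hlodd
  have haz : (p:ℤ) = 2*(a:ℤ) + 1 := by exact_mod_cast ha
  have hP0 : (0:ℤ) < p := by linarith
  have hQ0 : (0:ℤ) < q := by exact_mod_cast hq.pos
  have hPQ : (p:ℤ) < q := by exact_mod_cast hpq
  have hA : (p:ℤ) + l = 2*((a:ℤ)+b+1) := by rw [haz, hb]; ring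
  have hD : (p:ℤ) - l - 2 = 2*((a:ℤ)-b-1) := by rw [haz, hb]; ring
  have hA0 : (0:ℤ) < (p:ℤ) + l := by linarith
  have hlq : (0:ℤ) ≤ l * q := mul_nonneg (by linarith) hQ0.le
  -- exact divisions
  have hτ' : τ = ρ - s*((a:ℤ)+b+1) := by
    have hse : s*((p:ℤ)+l) = 2*(s*((a:ℤ)+b+1)) := by rw [hA]; ring
    rw [hτ, hse, Int.mul_ediv_cancel_left _ two_ne_zero]
  have hql' : ((a:ℤ)+b+1)*p ≤ (q:ℤ) := by
    have hpe : ((p:ℤ)+l)*p = 2*(((a:ℤ)+b+1)*p) := by rw [hA]; ring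
    rwa [hpe, Int.mul_ediv_cancel_left _ two_ne_zero] at hql
  have hqlP : ((p:ℤ)+l)*p ≤ 2*q := by
    have hpe : ((p:ℤ)+l)*p = 2*(((a:ℤ)+b+1)*p) := by rw [hA]; ring
    rw [hpe]; linarith
  -- division facts for s
  have hdm := Int.mul_ediv_add_emod (2*ρ) ((p:ℤ)+l)
  have hr0 := Int.emod_nonneg (2*ρ) (ne_of_gt hA0)
  have hr1 := Int.emod_lt_of_pos (2*ρ) hA0
  rw [← hs] at hdm
  have h1 : s * ((p:ℤ)+l) ≤ 2*ρ := by linarith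
  have h2 : 2*ρ < s * ((p:ℤ)+l) + ((p:ℤ)+l) := by linarith
  -- derive 2σ = p + l
  have hdvd1 : (p:ℤ) ∣ (σ+1)*q - 1 := ⟨(q:ℤ) - ρ - 1, by linear_combination -hρσ⟩
  have hdvd2 : (p:ℤ) ∣ 2 - (l+2)*q := hqcong.dvd
  have hdvd3 : (p:ℤ) ∣ (2*σ - l)*q := by
    have h := dvd_add (Dvd.dvd.mul_left hdvd1 2) hdvd2
    have he : 2*((σ+1)*q - 1) + (2 - (l+2)*q) = (2*σ - l)*q := by ring
    rwa [he] at h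
  have hpprime : Prime (p:ℤ) := Nat.prime_iff_prime_int.mp hp
  have hnd : ¬ (p:ℤ) ∣ (q:ℤ) := by
    intro h
    have h' : p ∣ q := by exact_mod_cast h
    have := (Nat.prime_dvd_prime_iff_eq hp hq).mp h'
    omega
  have hdvd4 : (p:ℤ) ∣ 2*σ - l := (hpprime.dvd_mul.mp hdvd3).resolve_right hnd
  have hσle : σ ≤ (p:ℤ) - 2 := by
    by_contra h
    push_neg at h
    have h' : (p:ℤ)*q ≤ (σ+1)*q := mul_le_mul_of_nonneg_right (by linarith) hQ0.le
    have h'' : (0:ℤ) ≤ ρ*p := mul_nonneg hρ0 hP0.le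
    nlinarith [hρσ]
  have hσp : 2*σ = (p:ℤ) + l := by
    obtain ⟨c, hc⟩ := hdvd4
    have hc0 : 0 ≤ c := by
      by_contra h
      push_neg at h
      have h' : c ≤ -1 := by omega
      have := mul_le_mul_of_nonneg_left h' hP0.le
      linarith
    have hc2 : c ≤ 1 := by
      by_contra h
      push_neg at h
      have h' : (2:ℤ) ≤ c := by omega
      have := mul_le_mul_of_nonneg_left h' hP0.le
      linarith
    interval_cases c
    · exfalso; rw [hb] at hc; omega
    · linarith
  -- key identity
  have hkey : 2*ρ*(p:ℤ) = (q:ℤ)*((p:ℤ) - l - 2) - 2*((p:ℤ)-1) := by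
    linear_combination (-2)*hρσ - (q:ℤ)*hσp
  refine ⟨?_, ?_, ?_, ?_⟩
  · -- l + 2 ≤ s
    by_contra hcon
    push_neg at hcon
    have hsl : s ≤ l + 1 := by linarith
    have h3 : 2*ρ < (l+2)*((p:ℤ)+l) :=
      lt_of_lt_of_le h2 (by linarith [mul_le_mul_of_nonneg_right hsl hA0.le])
    have h4 := mul_lt_mul_of_pos_right h3 hP0
    have h5 := mul_le_mul_of_nonneg_left hqlP (by linarith : (0:ℤ) ≤ l+2)
    have h6 := mul_le_mul_of_nonneg_left (show (2:ℤ) ≤ (p:ℤ)-3*l-6 by linarith) hQ0.le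
    linarith [hkey, h4, h5, h6, hPQ]
  · -- s*p + 1 ≤ q
    have h7 := mul_le_mul_of_nonneg_right h1 hP0.le
    have h8 : (s*(p:ℤ))*((p:ℤ)+l) ≤ ((q:ℤ)-1)*((p:ℤ)+l) := by linarith [h7, hkey, hlq, hQ0.le, hpl]
    have := le_of_mul_le_mul_right h8 hA0
    linarith
  · -- (τ+1)*p ≤ q
    have hτm : τ + 1 ≤ (a:ℤ)+b+1 := by
      have h3 : 2*τ < 2*((a:ℤ)+b+1) := by
        rw [hτ']
        have hse : s*((p:ℤ)+l) = 2*(s*((a:ℤ)+b+1)) := by rw [hA]; ring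
        linarith [h2, hse, hA]
      omega
    calc (τ+1)*(p:ℤ) ≤ ((a:ℤ)+b+1)*p := mul_le_mul_of_nonneg_right hτm hP0.le
      _ ≤ q := hql'
  · -- ρ < q - (p-l-2)*s/2
    have hde : ((p:ℤ)-l-2)*s = 2*(((a:ℤ)-b-1)*s) := by rw [hD]; ring
    rw [hde, Int.mul_ediv_cancel_left _ two_ne_zero]
    have hDnn : (0:ℤ) ≤ (p:ℤ) - l - 2 := by linarith
    have h4 := mul_le_mul_of_nonneg_right h1 hDnn
    have h5 : 2*(((a:ℤ)-b-1)*s)*((p:ℤ)+l) ≤ 2*ρ*((p:ℤ)-l-2) := by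
      calc 2*(((a:ℤ)-b-1)*s)*((p:ℤ)+l) = s*((p:ℤ)+l)*((p:ℤ)-l-2) := by rw [← hde]; ring
        _ ≤ _ := h4
    have h9 : (2*ρ + 2*(((a:ℤ)-b-1)*s))*((p:ℤ)+l) ≤ 4*ρ*((p:ℤ)-1) := by linarith [h5]
    have h10 : 4*ρ*((p:ℤ)-1) < (2*(q:ℤ))*((p:ℤ)+l) := by linarith [hkey, hlq, hρ0]
    have h11 : (2*ρ + 2*(((a:ℤ)-b-1)*s))*((p:ℤ)+l) < (2*(q:ℤ))*((p:ℤ)+l) :=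
      lt_of_le_of_lt h9 h10
    have := lt_of_mul_lt_mul_right h11 hA0.le
    linarith
end

section
/- Let 2 < p < q < r be primes, let k ≥ 0 be an integer, and for an integer m let f(m) be the unique integer with 0 ≤ f(m) < pq and r·f(m) ≡ k - m (mod pq). Let γ be the unique integer with 0 ≤ γ < pq and r·γ ≡ -1 (mod pq), and let [γ]_q be the unique integer with 0 ≤ [γ]_q ≤ p-1 and [γ]_q · q ≡ γ (mod p). Then for every integer m, f(m+q) ≡ f(m) + q²·[γ]_q (mod pq). -/
/-- For primes `2 < p < q < r`, `k ≥ 0`, with `f(m)` the unique residue mod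
`pq` of `r⁻¹(k-m)`, `γ` the residue of `-r⁻¹` and `[γ]_q` its `q`-part, one has
`f(m+q) ≡ f(m) + q²[γ]_q (mod pq)` for every integer `m`. -/
theorem stmt_18 (p q r : ℕ) (hp : p.Prime) (hq : q.Prime) (hr : r.Prime)
    (h2p : 2 < p) (hpq : p < q) (hqr : q < r) (k : ℕ)
    (f : ℤ → ℤ)
    (hf : ∀ m : ℤ, 0 ≤ f m ∧ f m < (p : ℤ) * q ∧
      (r : ℤ) * f m ≡ (k : ℤ) - m [ZMOD ((p : ℤ) * q)])
    (γ : ℤ) (hγ0 : 0 ≤ γ) (hγ1 : γ < (p : ℤ) * q)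
    (hγ : (r : ℤ) * γ ≡ -1 [ZMOD ((p : ℤ) * q)])
    (γq : ℤ) (hγq0 : 0 ≤ γq) (hγq1 : γq ≤ (p : ℤ) - 1)
    (hγq : γq * q ≡ γ [ZMOD (p : ℤ)]) :
    ∀ m : ℤ, f (m + q) ≡ f m + (q : ℤ) ^ 2 * γq [ZMOD ((p : ℤ) * q)] := by
  intro m
  obtain ⟨-, -, h1⟩ := hf (m + q)
  obtain ⟨-, -, h2⟩ := hf m
  -- gcd r (p*q) = 1
  have hcop : Int.gcd (r : ℤ) ((p : ℤ) * q) = 1 := by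
    have hrp : Nat.Coprime r p := (Nat.coprime_primes hr hp).mpr (by omega)
    have hrq : Nat.Coprime r q := (Nat.coprime_primes hr hq).mpr (by omega)
    have : ((p : ℤ) * q) = ((p * q : ℕ) : ℤ) := by push_cast; ring
    rw [this, Int.gcd_natCast_natCast]
    exact Nat.Coprime.mul_right hrp hrq
  -- q * γ ≡ q^2 * γq  [ZMOD p*q]
  have hstep : (q : ℤ) ^ 2 * γq ≡ γ * q [ZMOD ((p : ℤ) * q)] := by
    have hd : (p : ℤ) ∣ γ - γq * q := hγq.dvd
    obtain ⟨t, ht⟩ := hd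
    have : γ * q - (q : ℤ) ^ 2 * γq = (p : ℤ) * q * t := by
      have := congrArg (· * (q : ℤ)) ht
      nlinarith [this]
    exact Int.modEq_iff_dvd.mpr ⟨t, by linarith⟩
  -- r * f(m+q) ≡ r * (f m + γ * q)
  have key : (r : ℤ) * f (m + q) ≡ (r : ℤ) * (f m + γ * q) [ZMOD ((p : ℤ) * q)] := by
    have h3 : (r : ℤ) * (f m + γ * q) ≡ ((k : ℤ) - m) + (-1) * q [ZMOD ((p : ℤ) * q)] := by
      have := h2.add (hγ.mul_right (q : ℤ))
      calc (r : ℤ) * (f m + γ * q) = (r : ℤ) * f m + (r : ℤ) * γ * q := by ring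
        _ ≡ ((k : ℤ) - m) + (-1) * q [ZMOD ((p : ℤ) * q)] := this
    have h4 : ((k : ℤ) - m) + (-1) * q = (k : ℤ) - (m + q) := by ring
    rw [h4] at h3
    exact h1.trans h3.symm
  have hpos : (0 : ℤ) < (p : ℤ) * q :=
    mul_pos (by exact_mod_cast hp.pos) (by exact_mod_cast hq.pos)
  have hg : ((p : ℤ) * q).gcd (r : ℤ) = 1 := by
    rw [Int.gcd_comm]; exact hcop
  have hcancel : f (m + q) ≡ f m + γ * q [ZMOD ((p : ℤ) * q)] := by
    have := Int.ModEq.cancel_left_div_gcd hpos key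
    rwa [hg, Nat.cast_one, Int.ediv_one] at this
  exact hcancel.trans ((Int.ModEq.refl (f m)).add hstep.symm)
end
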